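/- arXiv:1708.07179 — 5 statements merged into one kernel-verified Lean document; each statement's English description precedes it below -/
import Mathlib

section
/- If H is a retract of a reflexive graph G, then the ℓ-visibility cop number of H is at most the ℓ-visibility cop number of G, i.e., c_ℓ(H) ≤ c_ℓ(G). -/
namespace CopsRobber

open Classical

noncomputable section

variable {V : Type*}

/-- Observation available to the cops: the robber's position is revealed iff some cop
is within graph distance `ℓ` of the robber. -/
def obs (G : SimpleGraph V) (ℓ : ℕ∞) {k : ℕ} (p : Fin k → V) (r : V) : Option V :=
  if ∃ i, (G.dist (p i) r : ℕ∞) ≤ ℓ then some r else none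

/-- A strategy for `k` cops on `G`: initial positions, and a move function depending on the
history of observations and the current cop positions.  Each cop moves along an edge or
passes. -/
structure CopStrategy (G : SimpleGraph V) (k : ℕ) where
  init : Fin k → V
  move : List (Option V) → (Fin k → V) → Fin k → V
  valid : ∀ h p i, move h p i = p i ∨ G.Adj (p i) (move h p i)

/-- A robber trajectory: in each round the robber moves along an edge or passes. -/
def RobberWalk (G : SimpleGraph V) (R : ℕ → V) : Prop :=
  ∀ t, R (t + 1) = R t ∨ G.Adj (R t) (R (t + 1))

/-- The play of the game: cop positions and observation history at the end of each round.
In round `t+1` the cops move first (observing the robber at his position of round `t` if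
within range), then the robber moves (and is observed at his new position if within range). -/
def play (G : SimpleGraph V) (ℓ : ℕ∞) {k : ℕ} (σ : CopStrategy G k) (R : ℕ → V) :
    ℕ → (Fin k → V) × List (Option V)
  | 0 => (σ.init, [obs G ℓ σ.init (R 0)])
  | t + 1 =>
    let s := play G ℓ σ R t
    let p := σ.move s.2 s.1
    (p, (s.2 ++ [obs G ℓ p (R t)]) ++ [obs G ℓ p (R (t + 1))])

/-- Positions of the cops at the end of round `t`. -/
def copsAt (G : SimpleGraph V) (ℓ : ℕ∞) {k : ℕ} (σ : CopStrategy G k) (R : ℕ → V)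
    (t : ℕ) : Fin k → V :=
  (play G ℓ σ R t).1

/-- The cops capture the robber: some cop occupies the robber's vertex, either
simultaneously or by moving onto it mid-round. -/
def Captures (G : SimpleGraph V) (ℓ : ℕ∞) {k : ℕ} (σ : CopStrategy G k) (R : ℕ → V) : Prop :=
  ∃ t i, copsAt G ℓ σ R t i = R t ∨ copsAt G ℓ σ R (t + 1) i = R t

/-- The cops see the robber: some cop comes within distance `ℓ` of the robber. -/
def Sees (G : SimpleGraph V) (ℓ : ℕ∞) {k : ℕ} (σ : CopStrategy G k) (R : ℕ → V) : Prop :=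
  ∃ t i, (G.dist (copsAt G ℓ σ R t i) (R t) : ℕ∞) ≤ ℓ ∨
    (G.dist (copsAt G ℓ σ R (t + 1) i) (R t) : ℕ∞) ≤ ℓ

/-- `c_ℓ(G)`: the minimum number of cops that guarantee capture of the robber in the
`ℓ`-visibility Cops and Robber game. -/
def visCopNumber (G : SimpleGraph V) (ℓ : ℕ∞) : ℕ :=
  sInf {k | ∃ σ : CopStrategy G k, ∀ R, RobberWalk G R → Captures G ℓ σ R}

/-- `c'_ℓ(G)`: the minimum number of cops that guarantee seeing the robber in the
`ℓ`-visibility Cops and Robber game. -/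
def visSeeNumber (G : SimpleGraph V) (ℓ : ℕ∞) : ℕ :=
  sInf {k | ∃ σ : CopStrategy G k, ∀ R, RobberWalk G R → Sees G ℓ σ R}

/-- The classical cop number: the game with full visibility. -/
def copNumber (G : SimpleGraph V) : ℕ := visCopNumber G ⊤

end
end CopsRobber


namespace RetractAux

open CopsRobber Classical

noncomputable section

variable {V W : Type*}

/-- Map a walk through a reflexive homomorphism. -/
lemma exists_walk_map {G : SimpleGraph V} {H : SimpleGraph W} {f : V → W}
    (hhom : ∀ a b : V, G.Adj a b → f a = f b ∨ H.Adj (f a) (f b))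
    {a b : V} (w : G.Walk a b) : ∃ w' : H.Walk (f a) (f b), w'.length ≤ w.length := by
  induction w with
  | nil => exact ⟨.nil, le_refl 0⟩
  | @cons u c b h w ih =>
    obtain ⟨w', hw'⟩ := ih
    rcases hhom _ _ h with he | ha
    · exact ⟨w'.copy he.symm rfl, by simpa using hw'.trans (Nat.le_succ _)⟩
    · exact ⟨.cons ha w', by simpa using hw'⟩

lemma dist_map_le {G : SimpleGraph V} {H : SimpleGraph W} {f : V → W}
    (hG : G.Connected)
    (hhom : ∀ a b : V, G.Adj a b → f a = f b ∨ H.Adj (f a) (f b)) (a b : V) :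
    H.dist (f a) (f b) ≤ G.dist a b := by
  obtain ⟨w, hw⟩ := hG.exists_walk_length_eq_dist a b
  obtain ⟨w', hw'⟩ := exists_walk_map hhom w
  calc H.dist (f a) (f b) ≤ w'.length := SimpleGraph.dist_le w'
    _ ≤ w.length := hw'
    _ = G.dist a b := hw

/-- Translate an observation on `H` back into the corresponding observation on `G`,
given the (simulated) cop positions `p` on `G`. -/
def translate (G : SimpleGraph V) (ι : W → V) (ℓ : ℕ∞) {k : ℕ} (p : Fin k → V) :
    Option W → Option V
  | none => none
  | some r => if ∃ i, (G.dist (p i) (ι r) : ℕ∞) ≤ ℓ then some (ι r) else none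

/-- One step of the history simulation. -/
def step (G : SimpleGraph V) (ι : W → V) (ℓ : ℕ∞) {k : ℕ} (σ : CopStrategy G k)
    (s : List (Option V) × (Fin k → V)) (o : Option W) : List (Option V) × (Fin k → V) :=
  let g' := s.1 ++ [translate G ι ℓ s.2 o]
  (g', if s.1.length % 2 = 0 then σ.move g' s.2 else s.2)

/-- Simulate the play of `σ` on `G` from the observation history on `H`. -/
def simState (G : SimpleGraph V) (ι : W → V) (ℓ : ℕ∞) {k : ℕ} (σ : CopStrategy G k)
    (h : List (Option W)) : List (Option V) × (Fin k → V) :=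
  h.foldl (step G ι ℓ σ) ([], σ.init)

lemma step_pair (G : SimpleGraph V) (ι : W → V) (ℓ : ℕ∞) {k : ℕ} (σ : CopStrategy G k)
    (g : List (Option V)) (p : Fin k → V) (o : Option W) :
    step G ι ℓ σ (g, p) o = (g ++ [translate G ι ℓ p o],
      if g.length % 2 = 0 then σ.move (g ++ [translate G ι ℓ p o]) p else p) := rfl

/-- The lifted strategy on `H`. -/
def lift (G : SimpleGraph V) (H : SimpleGraph W) (ι : W → V) (f : V → W) (ℓ : ℕ∞)
    {k : ℕ} (σ : CopStrategy G k) : CopStrategy H k where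
  init := fun i => f (σ.init i)
  move := fun h q i =>
    let tgt := f ((simState G ι ℓ σ h).2 i)
    if tgt = q i ∨ H.Adj (q i) tgt then tgt else q i
  valid := by
    intro h q i
    dsimp only
    split_ifs with hc
    · rcases hc with hc | hc
      · exact Or.inl hc
      · exact Or.inr hc
    · exact Or.inl rfl

lemma lift_move (G : SimpleGraph V) (H : SimpleGraph W) (ι : W → V) (f : V → W) (ℓ : ℕ∞)
    {k : ℕ} (σ : CopStrategy G k) (h : List (Option W)) (q : Fin k → W) (i : Fin k) :
    (lift G H ι f ℓ σ).move h q i =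
      if f ((simState G ι ℓ σ h).2 i) = q i ∨ H.Adj (q i) (f ((simState G ι ℓ σ h).2 i))
      then f ((simState G ι ℓ σ h).2 i) else q i := rfl

lemma translate_obs {G : SimpleGraph V} {H : SimpleGraph W} {ι : W → V} {f : V → W}
    (hG : G.Connected)
    (hhom : ∀ a b : V, G.Adj a b → f a = f b ∨ H.Adj (f a) (f b))
    (hretr : ∀ w : W, f (ι w) = w) (ℓ : ℕ∞) {k : ℕ}
    (p : Fin k → V) (r : W) :
    translate G ι ℓ p (obs H ℓ (fun i => f (p i)) r) = obs G ℓ p (ι r) := by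
  by_cases hH : ∃ i, (H.dist (f (p i)) r : ℕ∞) ≤ ℓ
  · rw [obs, if_pos hH]
    rfl
  · rw [obs, if_neg hH]
    rw [obs, if_neg ?_]
    · rfl
    · rintro ⟨i, hi⟩
      refine hH ⟨i, le_trans ?_ hi⟩
      have := dist_map_le hG hhom (p i) (ι r)
      rw [hretr r] at this
      exact_mod_cast this

lemma play_hist_length (G : SimpleGraph V) (ℓ : ℕ∞) {k : ℕ} (σ : CopStrategy G k)
    (R : ℕ → V) (t : ℕ) : (play G ℓ σ R t).2.length = 2 * t + 1 := by
  induction t with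
  | zero => simp [play]
  | succ t ih => simp [play, ih]; omega

lemma invariant {G : SimpleGraph V} {H : SimpleGraph W} {ι : W → V} {f : V → W}
    (hG : G.Connected)
    (hhom : ∀ a b : V, G.Adj a b → f a = f b ∨ H.Adj (f a) (f b))
    (hretr : ∀ w : W, f (ι w) = w) (ℓ : ℕ∞) {k : ℕ} (σ : CopStrategy G k)
    (r : ℕ → W) (t : ℕ) :
    (play H ℓ (lift G H ι f ℓ σ) r t).1 = (fun i => f ((play G ℓ σ (fun s => ι (r s)) t).1 i)) ∧
    simState G ι ℓ σ (play H ℓ (lift G H ι f ℓ σ) r t).2 =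
      ((play G ℓ σ (fun s => ι (r s)) t).2, (play G ℓ σ (fun s => ι (r s)) (t + 1)).1) := by
  set R : ℕ → V := fun s => ι (r s) with hR
  induction t with
  | zero =>
    constructor
    · rfl
    · show simState G ι ℓ σ [obs H ℓ (fun i => f (σ.init i)) (r 0)] = _
      rw [simState, List.foldl_cons, List.foldl_nil, step_pair,
        if_pos (by norm_num)]
      simp only [List.nil_append]
      rw [translate_obs hG hhom hretr]
      constructor <;> simp [play, obs]
  | succ t ih =>
    obtain ⟨ih1, ih2⟩ := ih
    -- notation
    have hmove : (lift G H ι f ℓ σ).move (play H ℓ (lift G H ι f ℓ σ) r t).2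
        (play H ℓ (lift G H ι f ℓ σ) r t).1
        = fun i => f ((play G ℓ σ R (t + 1)).1 i) := by
      funext i
      have hstep : (play G ℓ σ R (t + 1)).1
          = σ.move (play G ℓ σ R t).2 (play G ℓ σ R t).1 := by
        rw [play]
      have hval := σ.valid (play G ℓ σ R t).2 (play G ℓ σ R t).1 i
      rw [← hstep] at hval
      rw [lift_move, ih2, ih1]
      dsimp only
      rcases hval with hval | hval
      · rw [if_pos (Or.inl (by rw [hval]))]
      · rcases hhom _ _ hval with he | ha
        · rw [if_pos (Or.inl he.symm)]
        · rw [if_pos (Or.inr ha)]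
    have hhist : (play H ℓ (lift G H ι f ℓ σ) r (t + 1)).2 =
        (play H ℓ (lift G H ι f ℓ σ) r t).2
          ++ [obs H ℓ (fun i => f ((play G ℓ σ R (t + 1)).1 i)) (r t)]
          ++ [obs H ℓ (fun i => f ((play G ℓ σ R (t + 1)).1 i)) (r (t + 1))] := by
      show ((play H ℓ (lift G H ι f ℓ σ) r t).2 ++ _) ++ _ = _
      rw [hmove]
    have hpos : (play H ℓ (lift G H ι f ℓ σ) r (t + 1)).1 =
        fun i => f ((play G ℓ σ R (t + 1)).1 i) := by
      show (lift G H ι f ℓ σ).move _ _ = _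
      rw [hmove]
    refine ⟨hpos, ?_⟩
    rw [hhist, simState, List.foldl_append, List.foldl_append]
    rw [show (play H ℓ (lift G H ι f ℓ σ) r t).2.foldl (step G ι ℓ σ) ([], σ.init)
        = simState G ι ℓ σ (play H ℓ (lift G H ι f ℓ σ) r t).2 from rfl, ih2]
    rw [List.foldl_cons, List.foldl_nil, List.foldl_cons, List.foldl_nil]
    rw [step_pair G ι ℓ σ (play G ℓ σ R t).2 (play G ℓ σ R (t + 1)).1,
      if_neg (by rw [play_hist_length]; omega)]
    rw [translate_obs hG hhom hretr]
    rw [step_pair G ι ℓ σ ((play G ℓ σ R t).2 ++ [obs G ℓ (play G ℓ σ R (t + 1)).1 (R t)])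
      (play G ℓ σ R (t + 1)).1,
      if_pos (by simp only [List.length_append, play_hist_length,
        List.length_cons, List.length_nil]; omega)]
    rw [translate_obs hG hhom hretr]
    have h2 : (play G ℓ σ R (t + 1)).2
        = (play G ℓ σ R t).2 ++ [obs G ℓ (play G ℓ σ R (t + 1)).1 (R t)]
          ++ [obs G ℓ (play G ℓ σ R (t + 1)).1 (R (t + 1))] := by
      have hstep : (play G ℓ σ R (t + 1)).1
          = σ.move (play G ℓ σ R t).2 (play G ℓ σ R t).1 := by rw [play]
      conv_lhs => rw [play]
      rw [← hstep]
    have h1 : (play G ℓ σ R (t + 2)).1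
        = σ.move (play G ℓ σ R (t + 1)).2 (play G ℓ σ R (t + 1)).1 := by
      conv_lhs => rw [play]
    rw [h1, h2]

lemma winset_nonempty [Fintype V] (G : SimpleGraph V) (ℓ : ℕ∞) :
    {k | ∃ σ : CopStrategy G k, ∀ R, RobberWalk G R → Captures G ℓ σ R}.Nonempty := by
  classical
  refine ⟨Fintype.card V, ⟨fun i => (Fintype.equivFin V).symm i, fun _ p => p,
    fun _ _ _ => Or.inl rfl⟩, fun R _ => ⟨0, Fintype.equivFin V (R 0), Or.inl ?_⟩⟩
  simp [copsAt, play]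

end
end RetractAux


open CopsRobber in
/-- If `H` is a retract of a (reflexive) graph `G`, then
`c_ℓ(H) ≤ c_ℓ(G)`. -/
theorem retract_visCopNumber_le {V W : Type*} [Fintype V] [Fintype W]
    (G : SimpleGraph V) (H : SimpleGraph W) (hG : G.Connected)
    (ι : W → V) (hinj : Function.Injective ι)
    (hsub : ∀ a b : W, H.Adj a b → G.Adj (ι a) (ι b))
    (f : V → W) (hhom : ∀ a b : V, G.Adj a b → f a = f b ∨ H.Adj (f a) (f b))
    (hretr : ∀ w : W, f (ι w) = w) (ℓ : ℕ) :
    visCopNumber H (ℓ : ℕ∞) ≤ visCopNumber G (ℓ : ℕ∞) := by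
  classical
  have hmem := Nat.sInf_mem (RetractAux.winset_nonempty G (ℓ : ℕ∞))
  obtain ⟨σ, hσ⟩ := hmem
  apply Nat.sInf_le
  refine ⟨RetractAux.lift G H ι f (ℓ : ℕ∞) σ, ?_⟩
  intro r hr
  have hRwalk : RobberWalk G (fun s => ι (r s)) := fun t =>
    (hr t).imp (congrArg ι) (hsub _ _)
  obtain ⟨t, i, hcap⟩ := hσ _ hRwalk
  have inv := fun t => RetractAux.invariant (ι := ι) hG hhom hretr (ℓ : ℕ∞) σ r t
  refine ⟨t, i, ?_⟩
  rcases hcap with h | h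
  · left
    have := (inv t).1
    rw [copsAt] at h ⊢
    refine (congrFun this i).trans ?_
    rw [h]; exact hretr _
  · right
    have := (inv (t + 1)).1
    rw [copsAt] at h ⊢
    refine (congrFun this i).trans ?_
    rw [h]; exact hretr _
end

section
/- If H is a retract of a reflexive graph G, then the minimum number of ℓ-visibility cops needed to see the robber in H is at most that needed in G, i.e., c'_ℓ(H) ≤ c'_ℓ(G). -/
namespace RetractAux

open CopsRobber Classical

variable {V W : Type*}

/-- Translate an `H`-observation (given as an optional list entry) into the corresponding
`G`-observation, given the simulated `G`-cop positions `q`. -/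
noncomputable def gobs (G : SimpleGraph V) (ι : W → V) (L : ℕ∞) {k : ℕ}
    (q : Fin k → V) : Option (Option W) → Option V
  | some (some r) => if ∃ i, (G.dist (q i) (ι r) : ℕ∞) ≤ L then some (ι r) else none
  | _ => none

/-- Simulate the `G`-play (history and cop positions after round `t`) from an
`H`-observation history. -/
noncomputable def sim (G : SimpleGraph V) (ι : W → V) (L : ℕ∞) {k : ℕ}
    (σ : CopStrategy G k) : ℕ → List (Option W) → List (Option V) × (Fin k → V)
  | 0, h => ([gobs G ι L σ.init h[0]?], σ.init)
  | t+1, h =>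
    let s := sim G ι L σ t h
    let p := σ.move s.1 s.2
    ((s.1 ++ [gobs G ι L p h[2*t+1]?]) ++ [gobs G ι L p h[2*t+2]?], p)

/-- Pull back a cop strategy on `G` to a cop strategy on `H` along the retraction `f`. -/
noncomputable def pull (G : SimpleGraph V) (H : SimpleGraph W) (ι : W → V) (f : V → W)
    (L : ℕ∞) {k : ℕ} (σ : CopStrategy G k) : CopStrategy H k where
  init := fun i => f (σ.init i)
  move := fun h p i =>
    let s := sim G ι L σ ((h.length - 1)/2) h
    let v := f (σ.move s.1 s.2 i)
    if v = p i ∨ H.Adj (p i) v then v else p i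
  valid := by
    intro h p i
    dsimp only
    split
    · rename_i hc
      rcases hc with hc | hc
      · exact Or.inl hc
      · exact Or.inr hc
    · exact Or.inl rfl

lemma sim_append (G : SimpleGraph V) (ι : W → V) (L : ℕ∞) {k : ℕ} (σ : CopStrategy G k) :
    ∀ (t : ℕ) (h l : List (Option W)), 2*t+1 ≤ h.length →
      sim G ι L σ t (h ++ l) = sim G ι L σ t h := by
  intro t
  induction t with
  | zero =>
    intro h l hl
    simp only [sim]
    rw [List.getElem?_append_left (by omega : 0 < h.length)]
  | succ t ih =>
    intro h l hl
    simp only [sim]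
    rw [ih h l (by omega), List.getElem?_append_left (by omega : 2*t+1 < h.length),
      List.getElem?_append_left (by omega : 2*t+2 < h.length)]

lemma exists_hwalk (G : SimpleGraph V) (H : SimpleGraph W) (f : V → W)
    (hhom : ∀ a b : V, G.Adj a b → f a = f b ∨ H.Adj (f a) (f b)) :
    ∀ {a b : V} (p : G.Walk a b), ∃ q : H.Walk (f a) (f b), q.length ≤ p.length := by
  intro a b p
  induction p with
  | nil => exact ⟨SimpleGraph.Walk.nil, le_rfl⟩
  | cons hadj p ih =>
    obtain ⟨q, hq⟩ := ih
    rcases hhom _ _ hadj with he | ha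
    · exact ⟨q.copy he.symm rfl, by simpa using hq.trans (Nat.le_succ _)⟩
    · exact ⟨SimpleGraph.Walk.cons ha q, by simpa using hq⟩

lemma dist_map (G : SimpleGraph V) (H : SimpleGraph W) (hG : G.Connected) (f : V → W)
    (hhom : ∀ a b : V, G.Adj a b → f a = f b ∨ H.Adj (f a) (f b)) (a b : V) :
    H.dist (f a) (f b) ≤ G.dist a b := by
  obtain ⟨p, hp⟩ := hG.exists_walk_length_eq_dist a b
  obtain ⟨q, hq⟩ := exists_hwalk G H f hhom p
  exact (SimpleGraph.dist_le q).trans (hp ▸ hq)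

lemma obs_compat (G : SimpleGraph V) (H : SimpleGraph W) (hG : G.Connected)
    (ι : W → V) (f : V → W)
    (hhom : ∀ a b : V, G.Adj a b → f a = f b ∨ H.Adj (f a) (f b))
    (hretr : ∀ w : W, f (ι w) = w) (L : ℕ∞) {k : ℕ} (q : Fin k → V) (r : W) :
    gobs G ι L q (some (obs H L (fun i => f (q i)) r)) = obs G L q (ι r) := by
  by_cases hH : ∃ i, (H.dist (f (q i)) r : ℕ∞) ≤ L
  · rw [obs, if_pos hH]
    show (if ∃ i, (G.dist (q i) (ι r) : ℕ∞) ≤ L then some (ι r) else none) = _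
    rw [obs]
  · rw [obs, if_neg hH]
    show (none : Option V) = _
    rw [obs, if_neg]
    rintro ⟨i, hi⟩
    refine hH ⟨i, le_trans ?_ hi⟩
    have h := dist_map G H hG f hhom (q i) (ι r)
    rw [hretr r] at h
    exact_mod_cast h

lemma play_spec (G : SimpleGraph V) (H : SimpleGraph W) (hG : G.Connected)
    (ι : W → V) (f : V → W)
    (hhom : ∀ a b : V, G.Adj a b → f a = f b ∨ H.Adj (f a) (f b))
    (hretr : ∀ w : W, f (ι w) = w) (L : ℕ∞) {k : ℕ} (σ : CopStrategy G k)
    (R : ℕ → W) (t : ℕ) :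
    (play H L (pull G H ι f L σ) R t).1
        = (fun i => f ((play G L σ (fun n => ι (R n)) t).1 i)) ∧
    (play H L (pull G H ι f L σ) R t).2.length = 2*t+1 ∧
    sim G ι L σ t (play H L (pull G H ι f L σ) R t).2
      = ((play G L σ (fun n => ι (R n)) t).2, (play G L σ (fun n => ι (R n)) t).1) := by
  induction t with
  | zero =>
    refine ⟨rfl, rfl, ?_⟩
    show ([gobs G ι L σ.init (some (obs H L (fun i => f (σ.init i)) (R 0)))], σ.init) = _
    rw [obs_compat G H hG ι f hhom hretr L σ.init (R 0)]
    rfl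
  | succ t ih =>
    obtain ⟨h1, h2, h3⟩ := ih
    set τ := pull G H ι f L σ with hτ
    set sH := play H L τ R t with hsH
    set sG := play G L σ (fun n => ι (R n)) t with hsG
    set pG := σ.move sG.2 sG.1 with hpG
    have hpH : τ.move sH.2 sH.1 = fun i => f (pG i) := by
      funext i
      show (let s := sim G ι L σ ((sH.2.length - 1)/2) sH.2
            let v := f (σ.move s.1 s.2 i)
            if v = sH.1 i ∨ H.Adj (sH.1 i) v then v else sH.1 i) = f (pG i)
      have ht : (sH.2.length - 1)/2 = t := by omega
      rw [ht, h3]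
      dsimp only
      rw [if_pos]
      rcases σ.valid sG.2 sG.1 i with hv | hv
      · left; rw [h1]; exact congrArg f hv
      · rcases hhom _ _ hv with he | ha
        · left; rw [h1]; exact he.symm
        · right; rw [h1]; exact ha
    have eH : play H L τ R (t+1)
        = (τ.move sH.2 sH.1,
            (sH.2 ++ [obs H L (τ.move sH.2 sH.1) (R t)])
              ++ [obs H L (τ.move sH.2 sH.1) (R (t+1))]) := rfl
    have eG : play G L σ (fun n => ι (R n)) (t+1)
        = (pG, (sG.2 ++ [obs G L pG (ι (R t))]) ++ [obs G L pG (ι (R (t+1)))]) := rfl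
    refine ⟨by rw [eH, eG]; exact hpH, ?_, ?_⟩
    · rw [eH]
      simp only [List.length_append, List.length_singleton, h2]
      ring
    · rw [eH, eG]
      dsimp only
      rw [hpH]
      rw [List.append_assoc]
      simp only [sim]
      rw [sim_append G ι L σ t sH.2 _ (by omega), h3]
      have e1 : (sH.2 ++ ([obs H L (fun i => f (pG i)) (R t)]
          ++ [obs H L (fun i => f (pG i)) (R (t+1))]))[2*t+1]?
          = some (obs H L (fun i => f (pG i)) (R t)) := by
        rw [List.getElem?_append_right (by omega)]
        simp [h2]
      have e2 : (sH.2 ++ ([obs H L (fun i => f (pG i)) (R t)]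
          ++ [obs H L (fun i => f (pG i)) (R (t+1))]))[2*t+2]?
          = some (obs H L (fun i => f (pG i)) (R (t+1))) := by
        rw [List.getElem?_append_right (by omega)]
        simp [h2]
      rw [e1, e2]
      dsimp only
      rw [← hpG, obs_compat G H hG ι f hhom hretr L _ (R t),
        obs_compat G H hG ι f hhom hretr L _ (R (t+1))]

end RetractAux


open CopsRobber in
/-- If `H` is a retract of a (reflexive) graph `G`, then
`c'_ℓ(H) ≤ c'_ℓ(G)`. -/
theorem retract_visSeeNumber_le {V W : Type*} [Fintype V] [Fintype W]
    (G : SimpleGraph V) (H : SimpleGraph W) (hG : G.Connected)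
    (ι : W → V) (hinj : Function.Injective ι)
    (hsub : ∀ a b : W, H.Adj a b → G.Adj (ι a) (ι b))
    (f : V → W) (hhom : ∀ a b : V, G.Adj a b → f a = f b ∨ H.Adj (f a) (f b))
    (hretr : ∀ w : W, f (ι w) = w) (ℓ : ℕ) :
    visSeeNumber H (ℓ : ℕ∞) ≤ visSeeNumber G (ℓ : ℕ∞) := by
  classical
  set L : ℕ∞ := (ℓ : ℕ∞) with hL
  have hGne : (Fintype.card V)
      ∈ {k | ∃ σ : CopStrategy G k, ∀ R, RobberWalk G R → Sees G L σ R} := by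
    refine ⟨⟨fun i => (Fintype.equivFin V).symm i, fun _ p => p, fun _ p i => Or.inl rfl⟩,
      fun R hR => ⟨0, (Fintype.equivFin V) (R 0), Or.inl ?_⟩⟩
    have hc : copsAt G L ⟨fun i => (Fintype.equivFin V).symm i, fun _ p => p,
        fun _ p i => Or.inl rfl⟩ R 0 ((Fintype.equivFin V) (R 0)) = R 0 := by
      simp [copsAt, play]
    rw [hc, SimpleGraph.dist_self]
    simp
  have hne : {k | ∃ σ : CopStrategy G k, ∀ R, RobberWalk G R → Sees G L σ R}.Nonempty :=
    ⟨_, hGne⟩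
  have hmem := Nat.sInf_mem hne
  obtain ⟨σ, hσ⟩ := hmem
  refine Nat.sInf_le ⟨RetractAux.pull G H ι f L σ, ?_⟩
  intro R hR
  have hR' : RobberWalk G (fun n => ι (R n)) := by
    intro t
    rcases hR t with he | ha
    · exact Or.inl (congrArg ι he)
    · exact Or.inr (hsub _ _ ha)
  obtain ⟨t, i, hti⟩ := hσ _ hR'
  refine ⟨t, i, ?_⟩
  have key : ∀ s, copsAt H L (RetractAux.pull G H ι f L σ) R s i
      = f (copsAt G L σ (fun n => ι (R n)) s i) := by
    intro s
    exact congrFun (RetractAux.play_spec G H hG ι f hhom hretr L σ R s).1 i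
  have bound : ∀ c : V, (G.dist c (ι (R t)) : ℕ∞) ≤ L → (H.dist (f c) (R t) : ℕ∞) ≤ L := by
    intro c hc
    refine le_trans ?_ hc
    have h := RetractAux.dist_map G H hG f hhom c (ι (R t))
    rw [hretr] at h
    exact_mod_cast h
  rcases hti with h | h
  · exact Or.inl (by have hb := bound _ h; rw [← key t] at hb; exact hb)
  · exact Or.inr (by have hb := bound _ h; rw [← key (t+1)] at hb; exact hb)
end

section
/- If T is an isometric subtree of a connected graph G (i.e., distances in T equal distances in G for all pairs of vertices of T), then c_ℓ(T) ≤ c_ℓ(G). -/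
namespace IsoTreeAux

open SimpleGraph

section TreePart

variable {W : Type*} {T : SimpleGraph W}

lemma path_unique (hT : T.IsTree) {a b : W} {p q : T.Walk a b}
    (hp : p.IsPath) (hq : q.IsPath) : p = q := by
  obtain ⟨r, -, hr⟩ := hT.existsUnique_path a b
  rw [hr p hp, hr q hq]

lemma length_of_isPath (hT : T.IsTree) {a b : W} {p : T.Walk a b}
    (hp : p.IsPath) : p.length = T.dist a b := by
  obtain ⟨q, hq, hql⟩ := hT.isConnected.exists_path_of_dist a b
  rw [path_unique hT hp hq, hql]

lemma isPath_append {u v w : W} {p : T.Walk u v} {q : T.Walk v w}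
    (hp : p.IsPath) (hq : q.IsPath)
    (h : ∀ z, z ∈ p.support → z ∈ q.support → z = v) : (p.append q).IsPath := by
  rw [SimpleGraph.Walk.isPath_def, SimpleGraph.Walk.support_append, List.nodup_append]
  refine ⟨hp.support_nodup, ?_, ?_⟩
  · have := hq.support_nodup
    rw [q.support_eq_cons] at this
    exact this.of_cons
  · intro z hz z' hz' hzz'
    subst hzz'
    have hzq : z ∈ q.support := List.mem_of_mem_tail hz'
    have hzv := h z hz hzq
    subst hzv
    have hnodup := hq.support_nodup
    rw [q.support_eq_cons] at hnodup
    exact (List.nodup_cons.mp hnodup).1 hz'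

/-- A vertex not on a given shortest realization. -/
lemma not_mem_support_of_dist_lt (hT : T.IsTree) {x a b : W} {p : T.Walk a b}
    (hp : p.IsPath) (h : p.length < T.dist x b) : x ∉ p.support := by
  classical
  intro hx
  have h1 : T.dist x b ≤ (p.dropUntil x hx).length := SimpleGraph.dist_le _
  have h2 := SimpleGraph.Walk.length_dropUntil_le p hx
  omega

/-- existence of the first step of a geodesic -/
lemma exists_step (hc : T.Connected) {x c : W} (h : T.dist x c ≠ 0) :
    ∃ u, T.Adj x u ∧ T.dist u c + 1 = T.dist x c := by
  obtain ⟨p, hlen⟩ := hc.exists_walk_length_eq_dist x c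
  cases p with
  | nil => simp at h
  | @cons _ u _ hadj q =>
    refine ⟨u, hadj, ?_⟩
    have h1 : T.dist u c ≤ q.length := SimpleGraph.dist_le q
    have h2 : T.dist x c ≤ T.dist x u + T.dist u c := hc.dist_triangle
    have h3 : T.dist x u = 1 := SimpleGraph.dist_eq_one_iff_adj.mpr hadj
    have h4 : q.length + 1 = T.dist x c := by
      simpa [SimpleGraph.Walk.length_cons] using hlen
    omega

/-- uniqueness of the first step of a geodesic in a tree -/
lemma step_unique (hT : T.IsTree) {x c u₁ u₂ : W} (h₁ : T.Adj x u₁) (h₂ : T.Adj x u₂)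
    (d₁ : T.dist u₁ c + 1 = T.dist x c) (d₂ : T.dist u₂ c + 1 = T.dist x c) :
    u₁ = u₂ := by
  obtain ⟨p₁, hp₁, hl₁⟩ := hT.isConnected.exists_path_of_dist u₁ c
  obtain ⟨p₂, hp₂, hl₂⟩ := hT.isConnected.exists_path_of_dist u₂ c
  have hx₁ : x ∉ p₁.support := not_mem_support_of_dist_lt hT hp₁ (by omega)
  have hx₂ : x ∉ p₂.support := not_mem_support_of_dist_lt hT hp₂ (by omega)
  have hcons : (SimpleGraph.Walk.cons h₁ p₁) = (SimpleGraph.Walk.cons h₂ p₂) :=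
    path_unique hT (hp₁.cons hx₁) (hp₂.cons hx₂)
  have := congrArg (fun w => SimpleGraph.Walk.getVert w 1) hcons
  simpa [SimpleGraph.Walk.getVert_cons_succ, SimpleGraph.Walk.getVert_zero] using this

/-- If `a` lies behind neighbour `u` of `x` and `b` behind a different neighbour `u'`,
then the distance from `a` to `b` goes through both edges. -/
lemma dist_diverge (hT : T.IsTree) {x u u' a b : W} (hu : T.Adj x u) (hu' : T.Adj x u')
    (hne : u ≠ u') (ha : T.dist u a + 1 = T.dist x a) (hb : T.dist u' b + 1 = T.dist x b) :
    T.dist a b = T.dist u a + 2 + T.dist u' b := by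
  classical
  obtain ⟨p, hp, hl⟩ := hT.isConnected.exists_path_of_dist u a
  obtain ⟨q, hq, hl'⟩ := hT.isConnected.exists_path_of_dist u' b
  have hxp : x ∉ p.support := not_mem_support_of_dist_lt hT hp (by omega)
  have hxq : x ∉ q.support := not_mem_support_of_dist_lt hT hq (by omega)
  -- supports of p and q are disjoint
  have hdisj : ∀ z, z ∈ p.support → z ∈ q.support → False := by
    intro z hzp hzq
    have h1 : (SimpleGraph.Walk.cons hu (p.takeUntil z hzp)).IsPath :=
      (hp.takeUntil hzp).cons fun hx =>
        hxp (SimpleGraph.Walk.support_takeUntil_subset _ hzp hx)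
    have h2 : (SimpleGraph.Walk.cons hu' (q.takeUntil z hzq)).IsPath :=
      (hq.takeUntil hzq).cons fun hx =>
        hxq (SimpleGraph.Walk.support_takeUntil_subset _ hzq hx)
    have hconsEq := path_unique hT h1 h2
    have := congrArg (fun w => SimpleGraph.Walk.getVert w 1) hconsEq
    simp only [SimpleGraph.Walk.getVert_cons_succ, SimpleGraph.Walk.getVert_zero] at this
    exact hne this
  have huq : u ∉ q.support := fun hx => hdisj u p.start_mem_support hx
  have huq' : u ∉ (SimpleGraph.Walk.cons hu' q).support := by
    rw [SimpleGraph.Walk.support_cons]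
    intro hx
    rcases List.mem_cons.mp hx with h | h
    · exact hu.ne' h
    · exact huq h
  have hM : (SimpleGraph.Walk.cons hu.symm (SimpleGraph.Walk.cons hu' q)).IsPath :=
    (hq.cons hxq).cons huq'
  have hF : (p.reverse.append
      (SimpleGraph.Walk.cons hu.symm (SimpleGraph.Walk.cons hu' q))).IsPath := by
    apply isPath_append hp.reverse hM
    intro z hz hz'
    rw [SimpleGraph.Walk.support_reverse, List.mem_reverse] at hz
    rw [SimpleGraph.Walk.support_cons, SimpleGraph.Walk.support_cons] at hz'
    rcases List.mem_cons.mp hz' with h | h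
    · exact h
    rcases List.mem_cons.mp h with h | h
    · exact absurd (h ▸ hz) hxp
    · exact absurd (hdisj z hz h) not_false
  have := length_of_isPath hT hF
  rw [SimpleGraph.Walk.length_append, SimpleGraph.Walk.length_reverse,
    SimpleGraph.Walk.length_cons, SimpleGraph.Walk.length_cons] at this
  have hcomm : T.dist a b = T.dist u a + 2 + T.dist u' b := by
    rw [SimpleGraph.dist_comm (u := a) (v := b)] at *
    omega
  exact hcomm

/-- Crossing an edge `x ~ x'`: if `a` is behind `x'` and `b` is behind `x`, then
the `a`-`b` geodesic crosses the edge. -/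
lemma dist_cross (hT : T.IsTree) {x x' a b : W} (hadj : T.Adj x x')
    (ha : T.dist x' a + 1 = T.dist x a) (hb : T.dist x b + 1 = T.dist x' b) :
    T.dist a b = T.dist x' a + 1 + T.dist x b := by
  classical
  obtain ⟨p, hp, hl⟩ := hT.isConnected.exists_path_of_dist x' a
  obtain ⟨q, hq, hl'⟩ := hT.isConnected.exists_path_of_dist x b
  have hxp : x ∉ p.support := not_mem_support_of_dist_lt hT hp (by omega)
  have hxq : x' ∉ q.support := not_mem_support_of_dist_lt hT hq (by omega)
  have hdisj : ∀ z, z ∈ p.support → z ∈ q.support → False := by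
    intro z hzp hzq
    have h1 : (SimpleGraph.Walk.cons hadj (p.takeUntil z hzp)).IsPath :=
      (hp.takeUntil hzp).cons fun hx =>
        hxp (SimpleGraph.Walk.support_takeUntil_subset _ hzp hx)
    have h2 : (q.takeUntil z hzq).IsPath := hq.takeUntil hzq
    have hconsEq := path_unique hT h1 h2
    apply hxq
    apply SimpleGraph.Walk.support_takeUntil_subset _ hzq
    rw [← hconsEq]
    rw [SimpleGraph.Walk.support_cons]
    exact List.mem_cons_of_mem _ (SimpleGraph.Walk.start_mem_support _)
  have hM : (SimpleGraph.Walk.cons hadj.symm q).IsPath := hq.cons hxq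
  have hF : (p.reverse.append (SimpleGraph.Walk.cons hadj.symm q)).IsPath := by
    apply isPath_append hp.reverse hM
    intro z hz hz'
    rw [SimpleGraph.Walk.support_reverse, List.mem_reverse] at hz
    rw [SimpleGraph.Walk.support_cons] at hz'
    rcases List.mem_cons.mp hz' with h | h
    · exact h
    · exact absurd (hdisj z hz h) not_false
  have := length_of_isPath hT hF
  rw [SimpleGraph.Walk.length_append, SimpleGraph.Walk.length_reverse,
    SimpleGraph.Walk.length_cons] at this
  rw [SimpleGraph.dist_comm (u := a) (v := b)] at *
  omega

/-- Helly property for balls in a finite tree. -/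
theorem tree_helly [Fintype W] (hT : T.IsTree) {I : Type*} [Fintype I]
    (c : I → W) (r : I → ℕ) (h : ∀ i j, T.dist (c i) (c j) ≤ r i + r j) :
    ∃ x : W, ∀ i, T.dist x (c i) ≤ r i := by
  classical
  have hconn := hT.isConnected
  have hW : Nonempty W := hconn.nonempty
  by_cases hI : Nonempty I
  swap
  · exact ⟨Classical.arbitrary W, fun i => absurd ⟨i⟩ hI⟩
  have hUI : (Finset.univ : Finset I).Nonempty := Finset.univ_nonempty
  set f : W → ℤ := fun x => Finset.univ.sup' hUI (fun i => (T.dist x (c i) : ℤ) - r i) with hf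
  obtain ⟨x, -, hmin⟩ := Finset.exists_min_image (Finset.univ : Finset W) f Finset.univ_nonempty
  have hle : ∀ y i, (T.dist y (c i) : ℤ) - r i ≤ f y := fun y i =>
    Finset.le_sup' (fun i => (T.dist y (c i) : ℤ) - r i) (Finset.mem_univ i)
  obtain ⟨m, hm0⟩ : ∃ m : ℤ, f x = m := ⟨_, rfl⟩
  by_cases hm : m ≤ 0
  · refine ⟨x, fun i => ?_⟩
    have h1 := hle x i
    rw [hm0] at h1
    omega
  push_neg at hm
  exfalso
  obtain ⟨i0, -, hi0⟩ := Finset.exists_mem_eq_sup' hUI (fun i => (T.dist x (c i) : ℤ) - r i)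
  have hi0' : (T.dist x (c i0) : ℤ) - r i0 = m := by rw [← hm0]; exact hi0.symm
  have hips : T.dist x (c i0) ≠ 0 := by omega
  obtain ⟨x', hxx', hstep⟩ := exists_step hconn hips
  have htight : ∀ i, (T.dist x (c i) : ℤ) - r i = m → T.dist x' (c i) + 1 = T.dist x (c i) := by
    intro i hi
    have hnz : T.dist x (c i) ≠ 0 := by omega
    obtain ⟨u, hu, hustep⟩ := exists_step hconn hnz
    by_cases huw : u = x'
    · subst huw; exact hustep
    · exfalso
      have hdiv := dist_diverge hT hu hxx' huw hustep hstep
      have hpair := h i i0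
      omega
  have hfx' : f x' ≤ m := by
    apply Finset.sup'_le
    intro i _
    by_cases hti : (T.dist x (c i) : ℤ) - r i = m
    · have := htight i hti
      omega
    · have h1 := hle x i
      rw [hm0] at h1
      have h2 : T.dist x' (c i) ≤ T.dist x' x + T.dist x (c i) := hconn.dist_triangle
      have h3 : T.dist x' x = 1 := SimpleGraph.dist_eq_one_iff_adj.mpr hxx'.symm
      omega
  have hfx'' : f x' = m := by
    have h5 := hmin x' (Finset.mem_univ x')
    rw [hm0] at h5
    exact le_antisymm hfx' h5
  obtain ⟨j, -, hj⟩ := Finset.exists_mem_eq_sup' hUI (fun i => (T.dist x' (c i) : ℤ) - r i)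
  have hj' : (T.dist x' (c j) : ℤ) - r j = m := by rw [← hj]; exact hfx''
  have hjx : T.dist x (c j) + 1 = T.dist x' (c j) := by
    by_cases htj : (T.dist x (c j) : ℤ) - r j = m
    · have := htight j htj
      omega
    · have h1 := hle x j
      rw [hm0] at h1
      have h2 : T.dist x (c j) ≤ T.dist x x' + T.dist x' (c j) := hconn.dist_triangle
      have h3 : T.dist x x' = 1 := SimpleGraph.dist_eq_one_iff_adj.mpr hxx'
      have h4 : T.dist x' (c j) ≤ T.dist x' x + T.dist x (c j) := hconn.dist_triangle
      have h5 : T.dist x' x = 1 := SimpleGraph.dist_eq_one_iff_adj.mpr hxx'.symm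
      omega
  have hi0step := htight i0 hi0'
  have hcross := dist_cross hT hxx' hi0step hjx
  have hpair := h i0 j
  omega

/-- An isometric tree in a connected graph admits a nonexpansive retraction. -/
theorem exists_retraction {V : Type*} [Fintype V] [Fintype W]
    (G : SimpleGraph V) (hG : G.Connected) (hT : T.IsTree)
    (ι : W → V)
    (hiso : ∀ a b : W, T.dist a b = G.dist (ι a) (ι b)) :
    ∃ ρ : V → W, (∀ w, ρ (ι w) = w) ∧ ∀ x y, T.dist (ρ x) (ρ y) ≤ G.dist x y := by
  classical
  have hW : Nonempty W := hT.isConnected.nonempty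
  have key : ∀ s : Finset V, ∃ ρ : V → W,
      (∀ v ∈ s, ∀ w : W, T.dist (ρ v) w ≤ G.dist v (ι w)) ∧
      (∀ v ∈ s, ∀ y ∈ s, T.dist (ρ v) (ρ y) ≤ G.dist v y) := by
    intro s
    induction s using Finset.induction_on with
    | empty => exact ⟨fun _ => Classical.arbitrary W, by simp, by simp⟩
    | @insert v s hv IH =>
      obtain ⟨ρ, h1, h2⟩ := IH
      let c : W ⊕ {y : V // y ∈ s} → W := Sum.elim id (fun y => ρ y.1)
      let r : W ⊕ {y : V // y ∈ s} → ℕ :=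
        Sum.elim (fun w => G.dist v (ι w)) (fun y => G.dist v y.1)
      have hpair : ∀ i j, T.dist (c i) (c j) ≤ r i + r j := by
        rintro (w | y) (w' | y') <;>
          simp only [c, r, Sum.elim_inl, Sum.elim_inr, id_eq]
        · calc T.dist w w' = G.dist (ι w) (ι w') := hiso w w'
            _ ≤ G.dist (ι w) v + G.dist v (ι w') := hG.dist_triangle
            _ = G.dist v (ι w) + G.dist v (ι w') := by rw [G.dist_comm]
        · calc T.dist w (ρ y'.1) = T.dist (ρ y'.1) w := T.dist_comm
            _ ≤ G.dist y'.1 (ι w) := h1 y'.1 y'.2 w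
            _ ≤ G.dist y'.1 v + G.dist v (ι w) := hG.dist_triangle
            _ = G.dist v (ι w) + G.dist v y'.1 := by rw [G.dist_comm, Nat.add_comm]
        · calc T.dist (ρ y.1) w' ≤ G.dist y.1 (ι w') := h1 y.1 y.2 w'
            _ ≤ G.dist y.1 v + G.dist v (ι w') := hG.dist_triangle
            _ = G.dist v y.1 + G.dist v (ι w') := by rw [G.dist_comm]
        · calc T.dist (ρ y.1) (ρ y'.1) ≤ G.dist y.1 y'.1 := h2 y.1 y.2 y'.1 y'.2
            _ ≤ G.dist y.1 v + G.dist v y'.1 := hG.dist_triangle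
            _ = G.dist v y.1 + G.dist v y'.1 := by rw [G.dist_comm]
      obtain ⟨x, hx⟩ := tree_helly hT c r hpair
      refine ⟨Function.update ρ v x, ?_, ?_⟩
      · intro u hu w
        rcases Finset.mem_insert.mp hu with rfl | hus
        · rw [Function.update_self]
          exact hx (Sum.inl w)
        · rw [Function.update_of_ne (ne_of_mem_of_not_mem hus hv)]
          exact h1 u hus w
      · intro u hu y hy
        rcases Finset.mem_insert.mp hu with rfl | hus <;>
          rcases Finset.mem_insert.mp hy with rfl | hys
        · rw [Function.update_self]
          simp [SimpleGraph.dist_self]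
        · rw [Function.update_self, Function.update_of_ne (ne_of_mem_of_not_mem hys hv)]
          exact hx (Sum.inr ⟨y, hys⟩)
        · rw [Function.update_self, Function.update_of_ne (ne_of_mem_of_not_mem hus hv)]
          rw [T.dist_comm, G.dist_comm]
          exact hx (Sum.inr ⟨u, hus⟩)
        · rw [Function.update_of_ne (ne_of_mem_of_not_mem hus hv),
            Function.update_of_ne (ne_of_mem_of_not_mem hys hv)]
          exact h2 u hus y hys
  obtain ⟨ρ, h1, h2⟩ := key Finset.univ
  refine ⟨ρ, fun w => ?_, fun x y => h2 x (Finset.mem_univ x) y (Finset.mem_univ y)⟩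
  have := h1 (ι w) (Finset.mem_univ _) w
  rw [SimpleGraph.dist_self] at this
  exact hT.isConnected.dist_eq_zero_iff.mp (Nat.le_zero.mp this)

end TreePart

open CopsRobber

noncomputable section GamePart
open Classical

variable {V W : Type*} (G : SimpleGraph V) (T : SimpleGraph W) (ι : W → V) (ρ : V → W)
  (ℓ : ℕ∞) {k : ℕ}

/-- Reconstruction of the observation the simulated cops on `G` would get from an
observation in the game on `T`. -/
def gObs (o : Option W) (p : Fin k → V) : Option V :=
  o.bind fun r => if ∃ i, (G.dist (p i) (ι r) : ℕ∞) ≤ ℓ then some (ι r) else none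

/-- Simulated play of a cop strategy on `G` reconstructed from a history of observations
in the game on `T`. -/
def sim (σ : CopStrategy G k) : ℕ → List (Option W) → (Fin k → V) × List (Option V)
  | 0, h => (σ.init, [gObs G ι ℓ (h.getD 0 none) σ.init])
  | t+1, h =>
    let s := sim σ t h
    let p := σ.move s.2 s.1
    (p, (s.2 ++ [gObs G ι ℓ (h.getD (2*t+1) none) p]) ++ [gObs G ι ℓ (h.getD (2*t+2) none) p])

def simMove (σ : CopStrategy G k) (h : List (Option W)) (i : Fin k) : V :=
  σ.move (sim G ι ℓ σ (h.length / 2) h).2 (sim G ι ℓ σ (h.length / 2) h).1 i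

/-- The strategy on `T` obtained by projecting a strategy on `G` along `ρ`. -/
def tau (σ : CopStrategy G k) : CopStrategy T k where
  init i := ρ (σ.init i)
  move h p i :=
    if ρ (simMove G ι ℓ σ h i) = p i ∨ T.Adj (p i) (ρ (simMove G ι ℓ σ h i))
    then ρ (simMove G ι ℓ σ h i) else p i
  valid := by
    intro h p i
    split_ifs with hc
    · rcases hc with hc | hc
      · exact Or.inl hc
      · exact Or.inr hc
    · exact Or.inl rfl

lemma sim_append (σ : CopStrategy G k) :
    ∀ (t : ℕ) (h e : List (Option W)), 2*t+1 ≤ h.length →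
      sim G ι ℓ σ t (h ++ e) = sim G ι ℓ σ t h := by
  intro t
  induction t with
  | zero =>
    intro h e hlen
    simp only [sim]
    rw [List.getD_append _ _ _ _ (by omega)]
  | succ t IH =>
    intro h e hlen
    simp only [sim]
    rw [IH h e (by omega), List.getD_append _ _ _ _ (by omega),
      List.getD_append _ _ _ _ (by omega)]

lemma gObs_obs (hρι : ∀ w, ρ (ι w) = w) (hρ : ∀ x y, T.dist (ρ x) (ρ y) ≤ G.dist x y)
    (p : Fin k → V) (r : W) :
    gObs G ι ℓ (obs T ℓ (fun i => ρ (p i)) r) p = obs G ℓ p (ι r) := by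
  unfold obs gObs
  by_cases hvis : ∃ i, (T.dist (ρ (p i)) r : ℕ∞) ≤ ℓ
  · rw [if_pos hvis, Option.bind_some]
  · rw [if_neg hvis, Option.bind_none, if_neg]
    rintro ⟨i, hi⟩
    apply hvis
    refine ⟨i, le_trans ?_ hi⟩
    have h1 : T.dist (ρ (p i)) r ≤ G.dist (p i) (ι r) := by
      have := hρ (p i) (ι r)
      rwa [hρι r] at this
    exact_mod_cast Nat.cast_le.mpr h1

lemma play_eq (hT : T.IsTree) (hρι : ∀ w, ρ (ι w) = w)
    (hρ : ∀ x y, T.dist (ρ x) (ρ y) ≤ G.dist x y) (σ : CopStrategy G k)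
    (R : ℕ → W) (t : ℕ) :
    (play T ℓ (tau G T ι ρ ℓ σ) R t).1
        = (fun i => ρ ((play G ℓ σ (fun n => ι (R n)) t).1 i))
      ∧ (play T ℓ (tau G T ι ρ ℓ σ) R t).2.length = 2*t+1
      ∧ sim G ι ℓ σ t ((play T ℓ (tau G T ι ρ ℓ σ) R t).2)
        = play G ℓ σ (fun n => ι (R n)) t := by
  induction t with
  | zero =>
    refine ⟨rfl, by simp [play], ?_⟩
    show sim G ι ℓ σ 0 [obs T ℓ (fun i => ρ (σ.init i)) (R 0)] = _
    simp only [sim, List.getD_cons_zero]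
    rw [gObs_obs G T ι ρ ℓ hρι hρ]
    rfl
  | succ t IH =>
    obtain ⟨IH1, IH2, IH3⟩ := IH
    have hlen2 : (play T ℓ (tau G T ι ρ ℓ σ) R t).2.length / 2 = t := by omega
    have hmove : (tau G T ι ρ ℓ σ).move (play T ℓ (tau G T ι ρ ℓ σ) R t).2
        (play T ℓ (tau G T ι ρ ℓ σ) R t).1
        = fun i => ρ ((play G ℓ σ (fun n => ι (R n)) (t+1)).1 i) := by
      funext i
      have hsm : simMove G ι ℓ σ (play T ℓ (tau G T ι ρ ℓ σ) R t).2 i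
          = (play G ℓ σ (fun n => ι (R n)) (t+1)).1 i := by
        unfold simMove
        rw [hlen2, IH3]
        rfl
      show (if ρ (simMove G ι ℓ σ (play T ℓ (tau G T ι ρ ℓ σ) R t).2 i)
          = (play T ℓ (tau G T ι ρ ℓ σ) R t).1 i
          ∨ T.Adj ((play T ℓ (tau G T ι ρ ℓ σ) R t).1 i)
            (ρ (simMove G ι ℓ σ (play T ℓ (tau G T ι ρ ℓ σ) R t).2 i))
          then ρ (simMove G ι ℓ σ (play T ℓ (tau G T ι ρ ℓ σ) R t).2 i)
          else (play T ℓ (tau G T ι ρ ℓ σ) R t).1 i) = _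
      rw [hsm, IH1]
      have hcond : ρ ((play G ℓ σ (fun n => ι (R n)) (t+1)).1 i)
            = ρ ((play G ℓ σ (fun n => ι (R n)) t).1 i)
          ∨ T.Adj (ρ ((play G ℓ σ (fun n => ι (R n)) t).1 i))
            (ρ ((play G ℓ σ (fun n => ι (R n)) (t+1)).1 i)) := by
        have hval := σ.valid (play G ℓ σ (fun n => ι (R n)) t).2
          (play G ℓ σ (fun n => ι (R n)) t).1 i
        have hv' : (play G ℓ σ (fun n => ι (R n)) (t+1)).1 i
              = (play G ℓ σ (fun n => ι (R n)) t).1 i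
            ∨ G.Adj ((play G ℓ σ (fun n => ι (R n)) t).1 i)
              ((play G ℓ σ (fun n => ι (R n)) (t+1)).1 i) := hval
        rcases hv' with hv' | hv'
        · exact Or.inl (by rw [hv'])
        · have hd : T.dist (ρ ((play G ℓ σ (fun n => ι (R n)) t).1 i))
              (ρ ((play G ℓ σ (fun n => ι (R n)) (t+1)).1 i)) ≤ 1 := by
            have := hρ ((play G ℓ σ (fun n => ι (R n)) t).1 i)
              ((play G ℓ σ (fun n => ι (R n)) (t+1)).1 i)
            rwa [SimpleGraph.dist_eq_one_iff_adj.mpr hv'] at this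
          interval_cases hd' : T.dist (ρ ((play G ℓ σ (fun n => ι (R n)) t).1 i))
              (ρ ((play G ℓ σ (fun n => ι (R n)) (t+1)).1 i))
          · exact Or.inl (hT.isConnected.dist_eq_zero_iff.mp hd').symm
          · exact Or.inr (SimpleGraph.dist_eq_one_iff_adj.mp hd')
      rw [if_pos hcond]
    refine ⟨?_, ?_, ?_⟩
    · show (tau G T ι ρ ℓ σ).move (play T ℓ (tau G T ι ρ ℓ σ) R t).2
        (play T ℓ (tau G T ι ρ ℓ σ) R t).1 = _
      exact hmove
    · show ((play T ℓ (tau G T ι ρ ℓ σ) R t).2 ++ [_] ++ [_]).length = _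
      simp [IH2]
      omega
    · show sim G ι ℓ σ (t+1) ((play T ℓ (tau G T ι ρ ℓ σ) R t).2
          ++ [obs T ℓ ((tau G T ι ρ ℓ σ).move (play T ℓ (tau G T ι ρ ℓ σ) R t).2
              (play T ℓ (tau G T ι ρ ℓ σ) R t).1) (R t)]
          ++ [obs T ℓ ((tau G T ι ρ ℓ σ).move (play T ℓ (tau G T ι ρ ℓ σ) R t).2
              (play T ℓ (tau G T ι ρ ℓ σ) R t).1) (R (t+1))]) = _
      rw [hmove]
      simp only [sim]
      rw [sim_append G ι ℓ σ t _ _ (by simp [IH2]),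
        sim_append G ι ℓ σ t _ _ (by omega), IH3]
      rw [List.getD_append _ _ _ _ (by simp [IH2]),
        List.getD_append_right _ _ _ _ (by omega : (play T ℓ (tau G T ι ρ ℓ σ) R t).2.length ≤ 2*t+1)]
      have hgd1 : ∀ o : Option W, [o].getD
          (2*t+1 - (play T ℓ (tau G T ι ρ ℓ σ) R t).2.length) none = o := by
        intro o
        rw [IH2]
        simp
      rw [hgd1]
      have hgd2 : ∀ o o' : Option W, ((play T ℓ (tau G T ι ρ ℓ σ) R t).2 ++ [o] ++ [o']).getD
          (2*t+2) none = o' := by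
        intro o o'
        rw [List.getD_append_right _ _ _ _ (by simp [IH2])]
        simp [IH2]
      rw [hgd2]
      have hp1 : σ.move (play G ℓ σ (fun n => ι (R n)) t).2 (play G ℓ σ (fun n => ι (R n)) t).1
          = (play G ℓ σ (fun n => ι (R n)) (t+1)).1 := rfl
      rw [hp1, gObs_obs G T ι ρ ℓ hρι hρ ((play G ℓ σ (fun n => ι (R n)) (t+1)).1) (R t),
        gObs_obs G T ι ρ ℓ hρι hρ ((play G ℓ σ (fun n => ι (R n)) (t+1)).1) (R (t+1))]
      rfl
lemma tau_wins (hG : G.Connected) (hT : T.IsTree) (hρι : ∀ w, ρ (ι w) = w)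
    (hρ : ∀ x y, T.dist (ρ x) (ρ y) ≤ G.dist x y)
    (hsub : ∀ a b : W, T.Adj a b → G.Adj (ι a) (ι b)) (σ : CopStrategy G k)
    (hwin : ∀ R, RobberWalk G R → Captures G ℓ σ R) :
    ∀ R, RobberWalk T R → Captures T ℓ (tau G T ι ρ ℓ σ) R := by
  intro R hR
  have hS : RobberWalk G (fun n => ι (R n)) := by
    intro t
    rcases hR t with h | h
    · exact Or.inl (congrArg ι h)
    · exact Or.inr (hsub _ _ h)
  obtain ⟨t, i, hcap⟩ := hwin _ hS
  refine ⟨t, i, ?_⟩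
  have h1 := (play_eq G T ι ρ ℓ hT hρι hρ σ R t).1
  have h2 := (play_eq G T ι ρ ℓ hT hρι hρ σ R (t+1)).1
  unfold copsAt at hcap ⊢
  rcases hcap with h | h
  · left
    rw [h1]
    show ρ ((play G ℓ σ (fun n => ι (R n)) t).1 i) = R t
    rw [h]
    exact hρι (R t)
  · right
    rw [h2]
    show ρ ((play G ℓ σ (fun n => ι (R n)) (t+1)).1 i) = R t
    rw [h]
    exact hρι (R t)

end GamePart
end IsoTreeAux

open CopsRobber in

/-- If `T` is an isometric subtree of a connected graph `G`, then
`c_ℓ(T) ≤ c_ℓ(G)`. -/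
theorem isometric_tree_visCopNumber_le {V W : Type*} [Fintype V] [Fintype W]
    (G : SimpleGraph V) (T : SimpleGraph W) (hG : G.Connected) (hT : T.IsTree)
    (ι : W → V) (hinj : Function.Injective ι)
    (hsub : ∀ a b : W, T.Adj a b → G.Adj (ι a) (ι b))
    (hiso : ∀ a b : W, T.dist a b = G.dist (ι a) (ι b)) (ℓ : ℕ) :
    visCopNumber T (ℓ : ℕ∞) ≤ visCopNumber G (ℓ : ℕ∞) := by
  classical
  obtain ⟨ρ, hρι, hρ⟩ := IsoTreeAux.exists_retraction G hG hT ι hiso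
  have hmem : visCopNumber G (ℓ : ℕ∞)
      ∈ {k | ∃ σ : CopStrategy G k, ∀ R, RobberWalk G R → Captures G (ℓ : ℕ∞) σ R} := by
    apply Nat.sInf_mem
    refine ⟨Fintype.card V,
      ⟨⟨fun i => (Fintype.equivFin V).symm i, fun _ p => p, fun _ _ _ => Or.inl rfl⟩, ?_⟩⟩
    intro R _
    refine ⟨0, Fintype.equivFin V (R 0), Or.inl ?_⟩
    show (Fintype.equivFin V).symm (Fintype.equivFin V (R 0)) = R 0
    exact Equiv.symm_apply_apply _ _
  obtain ⟨σ, hσ⟩ := hmem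
  apply Nat.sInf_le
  exact ⟨IsoTreeAux.tau G T ι ρ (ℓ : ℕ∞) σ,
    IsoTreeAux.tau_wins G T ι ρ (ℓ : ℕ∞) hG hT hρι hρ hsub σ hσ⟩
end

section
/- For every ℓ ≥ 1 and n ≥ 3, the minimum number of ℓ-visibility cops needed to see the robber on the cycle C_n is 2 if n ≥ 2ℓ+3, and 1 otherwise. -/
open Fin.NatCast Fin.IntCast Fin.CommRing

section CycleAux
open SimpleGraph
variable {n : ℕ}

lemma fin_val_one (hn : 2 ≤ n) [NeZero n] : (1 : Fin n).val = 1 := by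
  rw [Fin.val_one']; exact Nat.mod_eq_of_lt (by omega)

lemma fin_eq_one_of_val {x : Fin n} [NeZero n] (hn : 2 ≤ n) (h : x.val = 1) : x = 1 :=
  Fin.ext (by rw [h, fin_val_one hn])

lemma fin_val_add_one [NeZero n] (x : Fin n) (h : x.val + 1 < n) : (x + 1).val = x.val + 1 := by
  have e : ((x.val + 1 : ℕ) : Fin n) = x + 1 := by push_cast [Fin.cast_val_eq_self]; ring
  rw [← e, Fin.val_natCast, Nat.mod_eq_of_lt h]

lemma fin_val_sub_one [NeZero n] (x : Fin n) (h : 1 ≤ x.val) : (x - 1).val = x.val - 1 := by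
  have h2 : x.val - 1 < n := lt_of_le_of_lt (Nat.sub_le _ _) x.isLt
  have e : ((x.val - 1 : ℕ) : Fin n) = x - 1 := by
    rw [Nat.cast_sub h]; push_cast [Fin.cast_val_eq_self]; ring
  rw [← e, Fin.val_natCast, Nat.mod_eq_of_lt h2]

lemma fin_val_neg [NeZero n] (x : Fin n) : (-x).val = (n - x.val) % n := by
  have e : ((n - x.val : ℕ) : Fin n) = -x := by
    rw [Nat.cast_sub x.isLt.le]
    simp [Fin.cast_val_eq_self]
  rw [← e, Fin.val_natCast]

lemma cyc_adj_add_one [NeZero n] (hn : 2 ≤ n) (a : Fin n) : (cycleGraph n).Adj a (a + 1) := by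
  rw [SimpleGraph.cycleGraph_adj']
  right
  rw [add_sub_cancel_left, fin_val_one hn]

lemma cyc_connected (hn : 3 ≤ n) : (cycleGraph n).Connected := by
  obtain ⟨m, rfl⟩ : ∃ m, n = m + 1 := ⟨n - 1, by omega⟩
  exact cycleGraph_connected

lemma cyc_dist_add_cast_le [NeZero n] (hn : 3 ≤ n) (a : Fin n) (k : ℕ) :
    (cycleGraph n).dist a (a + (k : Fin n)) ≤ k := by
  induction k with
  | zero => simp [SimpleGraph.dist_self]
  | succ k ih =>
    have e : a + ((k + 1 : ℕ) : Fin n) = (a + (k : Fin n)) + 1 := by push_cast; ring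
    rw [e]
    calc (cycleGraph n).dist a ((a + (k : Fin n)) + 1)
        ≤ (cycleGraph n).dist a (a + (k : Fin n)) +
          (cycleGraph n).dist (a + (k : Fin n)) ((a + (k : Fin n)) + 1) :=
          (cyc_connected hn).dist_triangle
      _ ≤ k + 1 := by
          have : (cycleGraph n).dist (a + (k : Fin n)) ((a + (k : Fin n)) + 1) = 1 :=
            SimpleGraph.dist_eq_one_iff_adj.mpr (cyc_adj_add_one (by omega) _)
          omega

lemma cyc_dist_le_val [NeZero n] (hn : 3 ≤ n) (a b : Fin n) :
    (cycleGraph n).dist a b ≤ (b - a).val := by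
  have := cyc_dist_add_cast_le hn a (b - a).val
  rwa [Fin.cast_val_eq_self, add_sub_cancel] at this

lemma cyc_dist_le_val' [NeZero n] (hn : 3 ≤ n) (a b : Fin n) :
    (cycleGraph n).dist a b ≤ (a - b).val := by
  rw [SimpleGraph.dist_comm]; exact cyc_dist_le_val hn b a

lemma cyc_walk_int [NeZero n] (hn : 3 ≤ n) {a b : Fin n} (w : (cycleGraph n).Walk a b) :
    ∃ z : ℤ, z.natAbs ≤ w.length ∧ b = a + (z : Fin n) := by
  induction w with
  | nil => exact ⟨0, by simp⟩
  | @cons a c b h p ih =>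
    obtain ⟨z, hz, hb⟩ := ih
    rw [SimpleGraph.cycleGraph_adj'] at h
    rcases h with h | h
    · have hc : a - c = 1 := fin_eq_one_of_val (by omega) h
      refine ⟨z - 1, by simp [Walk.length_cons]; omega, ?_⟩
      have : c = a - 1 := by linear_combination -hc
      rw [hb, this]; push_cast; ring
    · have hc : c - a = 1 := fin_eq_one_of_val (by omega) h
      refine ⟨z + 1, by simp [Walk.length_cons]; omega, ?_⟩
      have : c = a + 1 := by linear_combination hc
      rw [hb, this]; push_cast; ring

lemma cyc_le_dist [NeZero n] (hn : 3 ≤ n) (a b : Fin n) :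
    min (b - a).val (a - b).val ≤ (cycleGraph n).dist a b := by
  obtain ⟨w, hw⟩ := (cyc_connected hn).exists_walk_length_eq_dist a b
  obtain ⟨z, hz, hb⟩ := cyc_walk_int hn w
  rw [hw] at hz
  rcases le_or_gt 0 z with hzpos | hzneg
  · lift z to ℕ using hzpos with k
    push_cast at hb
    have hba : b - a = (k : Fin n) := by rw [hb]; ring
    calc min (b - a).val (a - b).val ≤ (b - a).val := min_le_left _ _
      _ ≤ k := by rw [hba, Fin.val_natCast]; exact Nat.mod_le _ _
      _ ≤ _ := by simpa using hz
  · set k := (-z).toNat with hkdef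
    have hzk : z = -(k : ℤ) := by omega
    rw [hzk] at hb
    push_cast at hb
    have hab : a - b = (k : Fin n) := by rw [hb]; ring
    calc min (b - a).val (a - b).val ≤ (a - b).val := min_le_right _ _
      _ ≤ k := by rw [hab, Fin.val_natCast]; exact Nat.mod_le _ _
      _ ≤ _ := by have : z.natAbs = k := by omega
                  omega

lemma cyc_far {n ℓ : ℕ} [NeZero n] (hn : 3 ≤ n) (a : Fin n) (k : ℕ)
    (h1 : ℓ + 1 ≤ k) (h2 : k + ℓ + 1 ≤ n) :
    ¬ (((SimpleGraph.cycleGraph n).dist a (a + (k : Fin n)) : ℕ∞) ≤ (ℓ : ℕ∞)) := by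
  rw [Nat.cast_le]
  intro hle
  have hmin := cyc_le_dist hn a (a + (k : Fin n))
  have e1 : (a + (k : Fin n) - a) = (k : Fin n) := by ring
  have e2 : (a - (a + (k : Fin n))) = -(k : Fin n) := by ring
  have hv : ((k : Fin n)).val = k := Fin.val_cast_of_lt (by omega)
  rw [e1, e2, fin_val_neg, hv, Nat.mod_eq_of_lt (by omega)] at hmin
  omega

lemma fin_natCast_ne_zero {n : ℕ} [NeZero n] (hn : 3 ≤ n) {k : ℕ} (h1 : 1 ≤ k) (h2 : k ≤ 2) :
    ((k : ℕ) : Fin n) ≠ 0 := by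
  intro h
  have := (Fin.natCast_eq_zero).mp h
  have := Nat.le_of_dvd (by omega) this
  omega

end CycleAux

section GameAux
open CopsRobber
variable {V : Type*}

lemma obs_eq_none (G : SimpleGraph V) (ℓ : ℕ∞) {k : ℕ} (p : Fin k → V) (r : V)
    (h : ∀ i, ¬ ((G.dist (p i) r : ℕ∞) ≤ ℓ)) : obs G ℓ p r = none := by
  rw [obs, if_neg]; push_neg; intro i; exact lt_of_not_ge (h i)

/-- The trajectory of cops who never observe anything. -/
noncomputable def blindAux (G : SimpleGraph V) {k : ℕ} (σ : CopStrategy G k) : ℕ → Fin k → V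
  | 0 => σ.init
  | t + 1 => σ.move (List.replicate (2 * t + 1) none) (blindAux G σ t)

lemma play_eq_blind (G : SimpleGraph V) (ℓ : ℕ∞) {k : ℕ} (σ : CopStrategy G k) (R : ℕ → V)
    (h1 : ∀ t, obs G ℓ (blindAux G σ t) (R t) = none)
    (h2 : ∀ t, obs G ℓ (blindAux G σ (t + 1)) (R t) = none) :
    ∀ t, play G ℓ σ R t = (blindAux G σ t, List.replicate (2 * t + 1) none) := by
  intro t
  induction t with
  | zero =>
    have := h1 0
    simp only [blindAux] at this
    simp only [play, this]
    rfl
  | succ t ih =>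
    have hl : List.replicate (2 * t + 1) (none : Option V) ++ [none] ++ [none]
        = List.replicate (2 * (t + 1) + 1) none := by
      rw [← List.replicate_succ', ← List.replicate_succ']
      congr 1
    simp only [play, ih]
    rw [show σ.move (List.replicate (2 * t + 1) none) (blindAux G σ t) = blindAux G σ (t+1) from rfl,
      h1 (t+1), h2 t]
    simp only [List.append_assoc] at hl ⊢
    rw [hl]

lemma copsAt_succ (G : SimpleGraph V) (ℓ : ℕ∞) {k : ℕ} (σ : CopStrategy G k) (R : ℕ → V) (t : ℕ) :
    copsAt G ℓ σ R (t + 1) = σ.move (play G ℓ σ R t).2 (copsAt G ℓ σ R t) := by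
  simp [copsAt, play]

end GameAux

open CopsRobber SimpleGraph in
lemma cyc_two_mem (ℓ n : ℕ) [NeZero n] (hℓ : 1 ≤ ℓ) (hn : 3 ≤ n) (hbig : 2 * ℓ + 3 ≤ n) :
    ∃ σ : CopStrategy (cycleGraph n) 2,
      ∀ R, RobberWalk (cycleGraph n) R → Sees (cycleGraph n) (ℓ : ℕ∞) σ R := by
  have hval : ∀ h : List (Option (Fin n)), ∀ p : Fin 2 → Fin n, ∀ i : Fin 2,
      (![p 0, p 1 + 1] : Fin 2 → Fin n) i = p i ∨ (cycleGraph n).Adj (p i) (![p 0, p 1 + 1] i) := by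
    intro h p i
    fin_cases i
    · exact Or.inl rfl
    · exact Or.inr (cyc_adj_add_one (by omega) _)
  refine ⟨⟨![0, 0], fun _ p => ![p 0, p 1 + 1], hval⟩, ?_⟩
  intro R hR
  set σ : CopStrategy (cycleGraph n) 2 := ⟨![0, 0], fun _ p => ![p 0, p 1 + 1], hval⟩ with hσ
  have hcop : ∀ t, copsAt (cycleGraph n) (ℓ : ℕ∞) σ R t 0 = 0 ∧
      copsAt (cycleGraph n) (ℓ : ℕ∞) σ R t 1 = ((t : ℕ) : Fin n) := by
    intro t
    induction t with
    | zero => constructor <;> simp [copsAt, play, hσ]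
    | succ t ih =>
      rw [copsAt_succ]
      constructor
      · show copsAt (cycleGraph n) (ℓ : ℕ∞) σ R t 0 = 0
        exact ih.1
      · show copsAt (cycleGraph n) (ℓ : ℕ∞) σ R t 1 + 1 = _
        rw [ih.2]; push_cast; ring
  by_contra hns
  simp only [Sees, not_exists, not_or] at hns
  -- basic bounds at every time
  have key : ∀ t, (ℓ + 1 ≤ (R t).val ∧ (R t).val + ℓ + 1 ≤ n) ∧
      (ℓ + 2 ≤ (R t - ((t : ℕ) : Fin n)).val ∧ (R t - ((t : ℕ) : Fin n)).val + ℓ + 1 ≤ n) := by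
    intro t
    have h0 := hns t 0
    have h1 := hns t 1
    rw [(hcop t).1, (hcop (t + 1)).1] at h0
    rw [(hcop t).2, (hcop (t + 1)).2] at h1
    obtain ⟨h0a, -⟩ := h0
    obtain ⟨h1a, h1b⟩ := h1
    rw [Nat.cast_le, not_le] at h0a h1a h1b
    have a1 : ℓ + 1 ≤ (R t).val := by
      have := cyc_dist_le_val hn (0 : Fin n) (R t)
      rw [sub_zero] at this
      omega
    have a2 : (R t).val + ℓ + 1 ≤ n := by
      have := cyc_dist_le_val' hn (0 : Fin n) (R t)
      rw [zero_sub, fin_val_neg, Nat.mod_eq_of_lt (by omega)] at this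
      have hlt := (R t).isLt
      omega
    have b1 : ℓ + 1 ≤ (R t - ((t : ℕ) : Fin n)).val := by
      have := cyc_dist_le_val hn ((t : ℕ) : Fin n) (R t)
      omega
    have b2 : (R t - ((t : ℕ) : Fin n)).val + ℓ + 1 ≤ n := by
      have h := cyc_dist_le_val' hn ((t : ℕ) : Fin n) (R t)
      have e : ((t : ℕ) : Fin n) - R t = -(R t - ((t : ℕ) : Fin n)) := by ring
      rw [e, fin_val_neg, Nat.mod_eq_of_lt (by omega)] at h
      have hlt := (R t - ((t : ℕ) : Fin n)).isLt
      omega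
    have b3 : ℓ + 2 ≤ (R t - ((t : ℕ) : Fin n)).val := by
      have h := cyc_dist_le_val hn (((t + 1 : ℕ)) : Fin n) (R t)
      have e : R t - (((t + 1 : ℕ)) : Fin n) = (R t - ((t : ℕ) : Fin n)) - 1 := by
        push_cast; ring
      rw [e, fin_val_sub_one _ (by omega)] at h
      omega
    exact ⟨⟨a1, a2⟩, ⟨b3, b2⟩⟩
  -- the decreasing measure
  set M : ℕ → ℕ := fun t => n * (R t - ((t : ℕ) : Fin n)).val + (n - (R t).val) with hM
  have decr : ∀ t, M (t + 1) < M t := by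
    intro t
    obtain ⟨⟨a1, a2⟩, ⟨b3, b2⟩⟩ := key t
    have esub : (R t - (((t + 1) : ℕ) : Fin n)).val = (R t - ((t : ℕ) : Fin n)).val - 1 := by
      have e : R t - (((t + 1 : ℕ)) : Fin n) = (R t - ((t : ℕ) : Fin n)) - 1 := by
        push_cast; ring
      rw [e, fin_val_sub_one _ (by omega)]
    have hmain : ((R (t + 1)).val = (R t).val + 1 ∧
          (R (t + 1) - (((t + 1) : ℕ) : Fin n)).val = (R t - ((t : ℕ) : Fin n)).val) ∨
        ((R (t + 1)).val + 1 ≤ (R t).val + 1 ∧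
          (R (t + 1) - (((t + 1) : ℕ) : Fin n)).val + 1 ≤ (R t - ((t : ℕ) : Fin n)).val) := by
      rcases hR t with heq | hadj
      · right
        rw [heq, esub]
        omega
      · rw [SimpleGraph.cycleGraph_adj'] at hadj
        rcases hadj with h | h
        · -- R t - R (t+1) = 1, robber moved backwards
          have hval : R (t + 1) = R t - 1 := by
            have := fin_eq_one_of_val (by omega) h
            linear_combination -this
          right
          constructor
          · rw [hval, fin_val_sub_one _ (by omega)]; omega
          · have e : R (t + 1) - (((t + 1) : ℕ) : Fin n)
                = ((R t - ((t : ℕ) : Fin n)) - 1) - 1 := by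
              rw [hval]; push_cast; ring
            rw [e, fin_val_sub_one _ (by rw [fin_val_sub_one _ (by omega)]; omega),
              fin_val_sub_one _ (by omega)]
            omega
        · -- R (t+1) - R t = 1, robber moved forwards
          have hval : R (t + 1) = R t + 1 := by
            have := fin_eq_one_of_val (by omega) h
            linear_combination this
          left
          constructor
          · rw [hval, fin_val_add_one _ (by omega)]
          · have e : R (t + 1) - (((t + 1) : ℕ) : Fin n) = R t - ((t : ℕ) : Fin n) := by
              rw [hval]; push_cast; ring
            rw [e]
    rcases hmain with ⟨hr, hd⟩ | ⟨hr, hd⟩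
    · rw [hM]
      dsimp only
      rw [hr, hd]
      exact Nat.add_lt_add_left (by omega) _
    · rw [hM]
      dsimp only
      calc n * (R (t + 1) - (((t + 1) : ℕ) : Fin n)).val + (n - (R (t + 1)).val)
          ≤ n * (R (t + 1) - (((t + 1) : ℕ) : Fin n)).val + n :=
            Nat.add_le_add_left (Nat.sub_le _ _) _
        _ = n * ((R (t + 1) - (((t + 1) : ℕ) : Fin n)).val + 1) := by ring
        _ ≤ n * (R t - ((t : ℕ) : Fin n)).val := Nat.mul_le_mul_left _ (by omega)
        _ < n * (R t - ((t : ℕ) : Fin n)).val + (n - (R t).val) :=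
            Nat.lt_add_of_pos_right (by omega)
  have mono : ∀ t, M t + t ≤ M 0 := by
    intro t
    induction t with
    | zero => omega
    | succ t ih => have := decr t; omega
  have := mono (M 0 + 1)
  omega

open CopsRobber SimpleGraph in
lemma cyc_one_mem (ℓ n : ℕ) [NeZero n] (hℓ : 1 ≤ ℓ) (hn : 3 ≤ n) (hsmall : n ≤ 2 * ℓ + 2) :
    ∃ σ : CopStrategy (cycleGraph n) 1,
      ∀ R, RobberWalk (cycleGraph n) R → Sees (cycleGraph n) (ℓ : ℕ∞) σ R := by
  refine ⟨⟨fun _ => 0, fun _ p i => p i + 1,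
    fun h p i => Or.inr (cyc_adj_add_one (by omega) _)⟩, ?_⟩
  intro R hR
  set σ : CopStrategy (cycleGraph n) 1 :=
    ⟨fun _ => 0, fun _ p i => p i + 1, fun h p i => Or.inr (cyc_adj_add_one (by omega) _)⟩ with hσ
  have hcop : ∀ t i, copsAt (cycleGraph n) (ℓ : ℕ∞) σ R t i = ((t : ℕ) : Fin n) := by
    intro t
    induction t with
    | zero => intro i; simp [copsAt, play, hσ]
    | succ t ih =>
      intro i
      rw [copsAt_succ]
      show copsAt (cycleGraph n) (ℓ : ℕ∞) σ R t i + 1 = _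
      rw [ih i]
      push_cast
      ring
  refine ⟨0, 0, ?_⟩
  rw [hcop 0 0, hcop 1 0]
  have hlt : (R 0).val < n := (R 0).isLt
  rcases le_or_gt (R 0).val ℓ with h | h
  · left
    rw [Nat.cast_le, Nat.cast_zero]
    have := cyc_dist_le_val hn (0 : Fin n) (R 0)
    rw [sub_zero] at this
    omega
  · rcases le_or_gt (n - (R 0).val) ℓ with h2 | h2
    · left
      rw [Nat.cast_le, Nat.cast_zero]
      have hd := cyc_dist_le_val' hn (0 : Fin n) (R 0)
      rw [zero_sub, fin_val_neg, Nat.mod_eq_of_lt (by omega)] at hd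
      omega
    · right
      rw [Nat.cast_le, Nat.cast_one]
      have hd := cyc_dist_le_val hn (1 : Fin n) (R 0)
      rw [fin_val_sub_one _ (by omega)] at hd
      omega

open CopsRobber SimpleGraph in
lemma cyc_one_not_mem (ℓ n : ℕ) [NeZero n] (hℓ : 1 ≤ ℓ) (hn : 3 ≤ n) (hbig : 2 * ℓ + 3 ≤ n) :
    ¬ ∃ σ : CopStrategy (cycleGraph n) 1,
      ∀ R, RobberWalk (cycleGraph n) R → Sees (cycleGraph n) (ℓ : ℕ∞) σ R := by
  rintro ⟨σ, hσ⟩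
  set c : ℕ → Fin n := fun t => blindAux (cycleGraph n) σ t 0 with hc
  set s : ℕ → ℕ := fun t => if c (t + 1) - c t = 1 then ℓ + 2 else ℓ + 1 with hs
  set R : ℕ → Fin n := fun t => c t + ((s t : ℕ) : Fin n) with hRdef
  have hblind : ∀ t i, blindAux (cycleGraph n) σ t i = c t := by
    intro t i
    rw [hc]
    exact congrArg _ (Subsingleton.elim i 0)
  have hsrange : ∀ t, s t = ℓ + 1 ∨ s t = ℓ + 2 := by
    intro t
    rw [hs]
    dsimp only
    split
    · exact Or.inr rfl
    · exact Or.inl rfl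
  have hone : (1 : Fin n).val = 1 := fin_val_one (by omega)
  have hδ : ∀ t, (c (t + 1) = c t ∧ s t = ℓ + 1) ∨ (c (t + 1) = c t + 1 ∧ s t = ℓ + 2) ∨
      (c (t + 1) = c t - 1 ∧ s t = ℓ + 1) := by
    intro t
    have hv := σ.valid (List.replicate (2 * t + 1) none) (blindAux (cycleGraph n) σ t) 0
    have hcc : c (t + 1) = σ.move (List.replicate (2 * t + 1) none) (blindAux (cycleGraph n) σ t) 0 := rfl
    rw [← hcc, hblind t 0] at hv
    rcases hv with h | h
    · left
      refine ⟨h, ?_⟩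
      rw [hs]
      dsimp only
      rw [if_neg]
      intro hcon
      rw [h, sub_self] at hcon
      exact (fin_natCast_ne_zero (n := n) hn (k := 1) le_rfl (by omega))
        (by rw [Nat.cast_one, ← hcon])
    · rw [SimpleGraph.cycleGraph_adj'] at h
      rcases h with h | h
      · -- c t - c (t+1) = 1
        have he : c (t + 1) = c t - 1 := by
          have h1 := fin_eq_one_of_val (by omega) h
          linear_combination -h1
        right; right
        refine ⟨he, ?_⟩
        rw [hs]
        dsimp only
        rw [if_neg]
        intro hcon
        rw [he] at hcon
        have : ((2 : ℕ) : Fin n) = 0 := by push_cast; linear_combination -hcon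
        exact fin_natCast_ne_zero hn (k := 2) (by omega) le_rfl this
      · -- c (t+1) - c t = 1
        have he : c (t + 1) = c t + 1 := by
          have h1 := fin_eq_one_of_val (by omega) h
          linear_combination h1
        right; left
        refine ⟨he, ?_⟩
        rw [hs]
        dsimp only
        rw [if_pos]
        rw [he]
        ring
  have hfar1 : ∀ t, ¬ (((cycleGraph n).dist (c t) (R t) : ℕ∞) ≤ (ℓ : ℕ∞)) := by
    intro t
    rw [hRdef]
    dsimp only
    rcases hsrange t with h | h <;> rw [h] <;>
      exact cyc_far hn _ _ (by omega) (by omega)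
  have hfar2 : ∀ t, ¬ (((cycleGraph n).dist (c (t + 1)) (R t) : ℕ∞) ≤ (ℓ : ℕ∞)) := by
    intro t
    have hex : ∃ k : ℕ, (ℓ + 1 ≤ k ∧ k + ℓ + 1 ≤ n) ∧ R t = c (t + 1) + (k : Fin n) := by
      rcases hδ t with ⟨h, hst⟩ | ⟨h, hst⟩ | ⟨h, hst⟩
      · exact ⟨ℓ + 1, ⟨le_rfl, by omega⟩, by rw [hRdef]; dsimp only; rw [h, hst]⟩
      · refine ⟨ℓ + 1, ⟨le_rfl, by omega⟩, ?_⟩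
        rw [hRdef]; dsimp only; rw [h, hst]; push_cast; ring
      · refine ⟨ℓ + 2, ⟨by omega, by omega⟩, ?_⟩
        rw [hRdef]; dsimp only; rw [h, hst]; push_cast; ring
    obtain ⟨k, ⟨hk1, hk2⟩, hk⟩ := hex
    rw [hk]
    exact cyc_far hn _ _ hk1 hk2
  have hplay := play_eq_blind (cycleGraph n) (ℓ : ℕ∞) σ R
    (fun t => obs_eq_none _ _ _ _ (fun i => by rw [hblind t i]; exact hfar1 t))
    (fun t => obs_eq_none _ _ _ _ (fun i => by rw [hblind (t + 1) i]; exact hfar2 t))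
  have hwalk : RobberWalk (cycleGraph n) R := by
    intro t
    have hdiff : R (t + 1) - R t = 0 ∨ R (t + 1) - R t = 1 ∨ R t - R (t + 1) = 1 := by
      rcases hδ t with ⟨h, hst⟩ | ⟨h, hst⟩ | ⟨h, hst⟩ <;>
        rcases hsrange (t + 1) with h2 | h2
      · left; rw [hRdef]; dsimp only; rw [h, hst, h2]; ring
      · right; left; rw [hRdef]; dsimp only; rw [h, hst, h2]; push_cast; ring
      · left; rw [hRdef]; dsimp only; rw [h, hst, h2]; push_cast; ring
      · right; left; rw [hRdef]; dsimp only; rw [h, hst, h2]; push_cast; ring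
      · right; right; rw [hRdef]; dsimp only; rw [h, hst, h2]; push_cast; ring
      · left; rw [hRdef]; dsimp only; rw [h, hst, h2]; push_cast; ring
    rcases hdiff with h | h | h
    · exact Or.inl (by linear_combination h)
    · refine Or.inr ?_
      rw [SimpleGraph.cycleGraph_adj']
      right
      rw [h, hone]
    · refine Or.inr ?_
      rw [SimpleGraph.cycleGraph_adj']
      left
      rw [h, hone]
  obtain ⟨t, i, hsee⟩ := hσ R hwalk
  have hc1 : copsAt (cycleGraph n) (ℓ : ℕ∞) σ R t i = c t := by
    rw [copsAt, hplay t]; exact hblind t i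
  have hc2 : copsAt (cycleGraph n) (ℓ : ℕ∞) σ R (t + 1) i = c (t + 1) := by
    rw [copsAt, hplay (t + 1)]; exact hblind (t + 1) i
  rcases hsee with h | h
  · rw [hc1] at h; exact hfar1 t h
  · rw [hc2] at h; exact hfar2 t h

open CopsRobber in
/-- For every `ℓ ≥ 1` and `n ≥ 3`, `c'_ℓ(C_n) = 2` if `n ≥ 2ℓ+3`, and
`c'_ℓ(C_n) = 1` otherwise. -/
theorem visSeeNumber_cycle (ℓ n : ℕ) (hℓ : 1 ≤ ℓ) (hn : 3 ≤ n) :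
    visSeeNumber (SimpleGraph.cycleGraph n) (ℓ : ℕ∞) =
      if 2 * ℓ + 3 ≤ n then 2 else 1 := by
  haveI : NeZero n := ⟨by omega⟩
  set G := SimpleGraph.cycleGraph n with hG
  set L : ℕ∞ := (ℓ : ℕ∞) with hL
  set S : Set ℕ := {k | ∃ σ : CopStrategy G k, ∀ R, RobberWalk G R → Sees G L σ R} with hS
  have hSdef : visSeeNumber G L = sInf S := rfl
  have hzero : (0 : ℕ) ∉ S := by
    rintro ⟨σ, hσ⟩
    obtain ⟨t, i, -⟩ := hσ (fun _ => 0) (fun t => Or.inl rfl)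
    exact i.elim0
  by_cases hcase : 2 * ℓ + 3 ≤ n
  · rw [if_pos hcase]
    have h2mem : (2 : ℕ) ∈ S := cyc_two_mem ℓ n hℓ hn hcase
    have h1not : (1 : ℕ) ∉ S := cyc_one_not_mem ℓ n hℓ hn hcase
    have hmem := Nat.sInf_mem (⟨2, h2mem⟩ : S.Nonempty)
    have hle := Nat.sInf_le h2mem
    rw [hSdef]
    rcases (by omega : sInf S = 0 ∨ sInf S = 1 ∨ sInf S = 2) with h | h | h
    · rw [h] at hmem; exact absurd hmem hzero
    · rw [h] at hmem; exact absurd hmem h1not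
    · exact h
  · rw [if_neg hcase]
    have h1mem : (1 : ℕ) ∈ S := cyc_one_mem ℓ n hℓ hn (by omega)
    have hmem := Nat.sInf_mem (⟨1, h1mem⟩ : S.Nonempty)
    have hle := Nat.sInf_le h1mem
    rw [hSdef]
    rcases (by omega : sInf S = 0 ∨ sInf S = 1) with h | h
    · rw [h] at hmem; exact absurd hmem hzero
    · exact h
end

section
/- For every ℓ ≥ 1 and all 2 ≤ m ≤ n, the ℓ-visibility cop number of the complete bipartite graph K_{m,n} equals 2, while the number of cops needed merely to see the robber equals 1. -/
section Aux

open CopsRobber Classical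

variable {m n : ℕ}

/-- Shorthand for the complete bipartite graph. -/
private abbrev KG (m n : ℕ) : SimpleGraph (Fin m ⊕ Fin n) := completeBipartiteGraph (Fin m) (Fin n)

private lemma kg_adj_iff (u v : Fin m ⊕ Fin n) : (KG m n).Adj u v ↔ u.isLeft ≠ v.isLeft := by
  cases u <;> cases v <;> simp [completeBipartiteGraph]

private lemma dist_le_of_adj {ℓ : ℕ} {u v : Fin m ⊕ Fin n} (h : (KG m n).Adj u v)
    (hℓ : 1 ≤ ℓ) : ((KG m n).dist u v : ℕ∞) ≤ (ℓ : ℕ∞) := by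
  have h1 : (KG m n).dist u v ≤ 1 := by
    have := SimpleGraph.dist_le (SimpleGraph.Adj.toWalk h)
    simpa using this
  exact_mod_cast le_trans h1 hℓ

/-- The seeing cop's move: from the left side jump to `inr 0`, otherwise stay. -/
private def moveSee (hn : 0 < n) (p : Fin 1 → Fin m ⊕ Fin n) (i : Fin 1) : Fin m ⊕ Fin n :=
  match p i with
  | Sum.inl _ => Sum.inr ⟨0, hn⟩
  | Sum.inr x => Sum.inr x

private lemma moveSee_valid (hn : 0 < n) (p : Fin 1 → Fin m ⊕ Fin n) (i : Fin 1) :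
    moveSee hn p i = p i ∨ (KG m n).Adj (p i) (moveSee hn p i) := by
  cases hp : p i with
  | inl a => right; simp [moveSee, hp, completeBipartiteGraph]
  | inr b => left; simp [moveSee, hp]

/-- One-cop strategy that sees the robber: start at `inl 0`, then jump to `inr 0`. -/
private noncomputable def σsee (hm : 0 < m) (hn : 0 < n) : CopStrategy (KG m n) 1 where
  init := fun _ => Sum.inl ⟨0, hm⟩
  move := fun _ => moveSee hn
  valid := fun _ p i => moveSee_valid hn p i

/-- The capturing cops' move: if the observation history is a single sighting, an adjacent
cop pounces; otherwise stay. -/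
private noncomputable def moveCap (h : List (Option (Fin m ⊕ Fin n)))
    (p : Fin 2 → Fin m ⊕ Fin n) (i : Fin 2) : Fin m ⊕ Fin n :=
  match h with
  | some r :: _ => if (KG m n).Adj (p i) r then r else p i
  | _ => p i

private lemma moveCap_valid (h : List (Option (Fin m ⊕ Fin n))) (p : Fin 2 → Fin m ⊕ Fin n)
    (i : Fin 2) : moveCap h p i = p i ∨ (KG m n).Adj (p i) (moveCap h p i) := by
  rcases h with _ | ⟨_ | r, t⟩
  · exact Or.inl rfl
  · exact Or.inl rfl
  · simp only [moveCap]
    by_cases hadj : (KG m n).Adj (p i) r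
    · rw [if_pos hadj]; exact Or.inr hadj
    · rw [if_neg hadj]; exact Or.inl rfl

/-- Two-cop strategy that captures: start at `inl 0, inr 0`; the robber is observed
immediately, and the adjacent cop pounces. -/
private noncomputable def σcap (hm : 0 < m) (hn : 0 < n) : CopStrategy (KG m n) 2 where
  init := ![Sum.inl ⟨0, hm⟩, Sum.inr ⟨0, hn⟩]
  move := moveCap
  valid := moveCap_valid

/-- With `ℓ ≥ 1`, two cops capture the robber on `K_{m,n}`. -/
private lemma two_cops_capture {ℓ : ℕ} (hℓ : 1 ≤ ℓ) (hm : 0 < m) (hn : 0 < n) :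
    ∀ R, RobberWalk (KG m n) R → Captures (KG m n) (ℓ : ℕ∞) (σcap hm hn) R := by
  intro R _
  have hadj : ∃ i : Fin 2, (KG m n).Adj ((σcap hm hn).init i) (R 0) := by
    cases h0 : R 0 with
    | inl a => exact ⟨1, by simp [σcap, completeBipartiteGraph]⟩
    | inr b => exact ⟨0, by simp [σcap, completeBipartiteGraph]⟩
  obtain ⟨i, hi⟩ := hadj
  have hobs : obs (KG m n) (ℓ : ℕ∞) (σcap hm hn).init (R 0) = some (R 0) := by
    rw [obs, if_pos ⟨i, dist_le_of_adj hi hℓ⟩]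
  refine ⟨0, i, Or.inr ?_⟩
  have h1 : copsAt (KG m n) (ℓ : ℕ∞) (σcap hm hn) R 1
      = (σcap hm hn).move [obs (KG m n) (ℓ : ℕ∞) (σcap hm hn).init (R 0)] (σcap hm hn).init :=
    rfl
  rw [h1, hobs]
  show moveCap [some (R 0)] (σcap hm hn).init i = R 0
  simp only [moveCap]
  rw [if_pos hi]

/-- With `ℓ ≥ 1`, one cop sees the robber on `K_{m,n}`. -/
private lemma one_cop_sees {ℓ : ℕ} (hℓ : 1 ≤ ℓ) (hm : 0 < m) (hn : 0 < n) :
    ∀ R, RobberWalk (KG m n) R → Sees (KG m n) (ℓ : ℕ∞) (σsee hm hn) R := by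
  intro R _
  have hc0 : copsAt (KG m n) (ℓ : ℕ∞) (σsee hm hn) R 0 0 = Sum.inl ⟨0, hm⟩ := rfl
  have hc1 : copsAt (KG m n) (ℓ : ℕ∞) (σsee hm hn) R 1 0 = Sum.inr ⟨0, hn⟩ := rfl
  refine ⟨0, 0, ?_⟩
  cases h0 : R 0 with
  | inl a =>
    right; rw [hc1]
    exact dist_le_of_adj (by simp [completeBipartiteGraph]) hℓ
  | inr b =>
    left; rw [hc0]
    exact dist_le_of_adj (by simp [completeBipartiteGraph]) hℓ

/-! ### Evasion of one cop -/

/-- A vertex on the same side as `v` but distinct from it. -/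
private def esc (hm : 2 ≤ m) (hn : 2 ≤ n) : Fin m ⊕ Fin n → Fin m ⊕ Fin n
  | Sum.inl a => Sum.inl (if a = ⟨0, by omega⟩ then ⟨1, by omega⟩ else ⟨0, by omega⟩)
  | Sum.inr b => Sum.inr (if b = ⟨0, by omega⟩ then ⟨1, by omega⟩ else ⟨0, by omega⟩)

private lemma esc_ne (hm : 2 ≤ m) (hn : 2 ≤ n) (v : Fin m ⊕ Fin n) : esc hm hn v ≠ v := by
  cases v with
  | inl a =>
    simp only [esc, ne_eq, Sum.inl.injEq]
    split <;> rename_i h <;> simp_all [Fin.ext_iff] <;> omega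
  | inr b =>
    simp only [esc, ne_eq, Sum.inr.injEq]
    split <;> rename_i h <;> simp_all [Fin.ext_iff] <;> omega

private lemma esc_isLeft (hm : 2 ≤ m) (hn : 2 ≤ n) (v : Fin m ⊕ Fin n) :
    (esc hm hn v).isLeft = v.isLeft := by
  cases v <;> simp [esc]

/-- Robber's next position: stay if the cop is on your side (hence can't reach you next
move), else dodge to a vertex on the cop's side distinct from the cop. -/
private def nextR (hm : 2 ≤ m) (hn : 2 ≤ n) (c' r : Fin m ⊕ Fin n) : Fin m ⊕ Fin n :=
  if c'.isLeft = r.isLeft then r else esc hm hn c'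

/-- The combined evolution of a one-cop play against the evading robber. -/
private noncomputable def Z (hm : 2 ≤ m) (hn : 2 ≤ n) (L : ℕ∞) (σ : CopStrategy (KG m n) 1) :
    ℕ → ((Fin 1 → Fin m ⊕ Fin n) × List (Option (Fin m ⊕ Fin n))) × (Fin m ⊕ Fin n)
  | 0 =>
    ((σ.init, [obs (KG m n) L σ.init (esc hm hn (σ.init 0))]), esc hm hn (σ.init 0))
  | t + 1 =>
    let s := Z hm hn L σ t
    let p := σ.move s.1.2 s.1.1
    let r' := nextR hm hn (p 0) s.2
    ((p, (s.1.2 ++ [obs (KG m n) L p s.2]) ++ [obs (KG m n) L p r']), r')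

private lemma Z_play (hm : 2 ≤ m) (hn : 2 ≤ n) (L : ℕ∞) (σ : CopStrategy (KG m n) 1) :
    ∀ t, play (KG m n) L σ (fun s => (Z hm hn L σ s).2) t = (Z hm hn L σ t).1 := by
  intro t
  induction t with
  | zero => rfl
  | succ t ih =>
    rw [play, ih]
    rfl

/-- The evasion invariant: the cop is on the robber's side but not on his vertex. -/
private lemma Z_invariant (hm : 2 ≤ m) (hn : 2 ≤ n) (L : ℕ∞) (σ : CopStrategy (KG m n) 1) :
    ∀ t, ((Z hm hn L σ t).1.1 0).isLeft = ((Z hm hn L σ t).2).isLeft ∧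
      (Z hm hn L σ t).1.1 0 ≠ (Z hm hn L σ t).2 := by
  intro t
  induction t with
  | zero =>
    constructor
    · exact (esc_isLeft hm hn _).symm
    · exact fun h => esc_ne hm hn (σ.init 0) h.symm
  | succ t ih =>
    obtain ⟨hside, hne⟩ := ih
    set s := Z hm hn L σ t with hs
    have hc' : (Z hm hn L σ (t+1)).1.1 0 = σ.move s.1.2 s.1.1 0 := rfl
    have hr' : (Z hm hn L σ (t+1)).2 = nextR hm hn (σ.move s.1.2 s.1.1 0) s.2 := rfl
    rcases σ.valid s.1.2 s.1.1 0 with heq | hadj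
    · rw [hc', hr', heq, nextR, if_pos hside]
      exact ⟨hside, hne⟩
    · have hne' : (σ.move s.1.2 s.1.1 0).isLeft ≠ s.2.isLeft := by
        have h2 := (kg_adj_iff _ _).mp hadj
        rw [hside] at h2
        exact h2.symm
      rw [hc', hr', nextR, if_neg hne']
      exact ⟨(esc_isLeft hm hn _).symm, fun h => esc_ne hm hn _ h.symm⟩

/-- The cop's new position also misses the robber's old position. -/
private lemma Z_miss (hm : 2 ≤ m) (hn : 2 ≤ n) (L : ℕ∞) (σ : CopStrategy (KG m n) 1)
    (t : ℕ) : (Z hm hn L σ (t+1)).1.1 0 ≠ (Z hm hn L σ t).2 := by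
  obtain ⟨hside, hne⟩ := Z_invariant hm hn L σ t
  set s := Z hm hn L σ t with hs
  have hc' : (Z hm hn L σ (t+1)).1.1 0 = σ.move s.1.2 s.1.1 0 := rfl
  rw [hc']
  rcases σ.valid s.1.2 s.1.1 0 with heq | hadj
  · rw [heq]; exact hne
  · intro h
    have h2 := (kg_adj_iff _ _).mp hadj
    rw [hside, h] at h2
    exact h2 rfl

/-- The evading robber's trajectory is a legal walk. -/
private lemma Z_walk (hm : 2 ≤ m) (hn : 2 ≤ n) (L : ℕ∞) (σ : CopStrategy (KG m n) 1) :
    RobberWalk (KG m n) (fun s => (Z hm hn L σ s).2) := by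
  intro t
  change (Z hm hn L σ (t+1)).2 = (Z hm hn L σ t).2 ∨
    (KG m n).Adj ((Z hm hn L σ t).2) ((Z hm hn L σ (t+1)).2)
  set s := Z hm hn L σ t with hs
  have hr' : (Z hm hn L σ (t+1)).2 = nextR hm hn (σ.move s.1.2 s.1.1 0) s.2 := rfl
  rw [hr', nextR]
  split
  · exact Or.inl rfl
  · rename_i hne
    right
    rw [kg_adj_iff, esc_isLeft]
    exact fun h => hne h.symm

/-- One cop cannot capture the robber on `K_{m,n}` with `m, n ≥ 2`. -/
private lemma one_cop_fails (hm : 2 ≤ m) (hn : 2 ≤ n) (L : ℕ∞) :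
    ¬ ∃ σ : CopStrategy (KG m n) 1, ∀ R, RobberWalk (KG m n) R → Captures (KG m n) L σ R := by
  rintro ⟨σ, hσ⟩
  obtain ⟨t, i, hcap⟩ := hσ (fun s => (Z hm hn L σ s).2) (Z_walk hm hn L σ)
  have hi : i = 0 := Subsingleton.elim _ _
  subst hi
  have hc : ∀ u, copsAt (KG m n) L σ (fun s => (Z hm hn L σ s).2) u = (Z hm hn L σ u).1.1 := by
    intro u; rw [copsAt, Z_play]
  rcases hcap with h | h
  · rw [hc] at h
    exact (Z_invariant hm hn L σ t).2 h
  · rw [hc] at h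
    exact Z_miss hm hn L σ t h

end Aux


private lemma sInf_eq_two {S : Set ℕ} (h2 : 2 ∈ S) (h1 : 1 ∉ S) (h0 : 0 ∉ S) : sInf S = 2 := by
  have hmem := Nat.sInf_mem (⟨2, h2⟩ : S.Nonempty)
  have hle := Nat.sInf_le h2
  have e0 : sInf S ≠ 0 := fun h => h0 (h ▸ hmem)
  have e1 : sInf S ≠ 1 := fun h => h1 (h ▸ hmem)
  omega

private lemma sInf_eq_one {S : Set ℕ} (h1 : 1 ∈ S) (h0 : 0 ∉ S) : sInf S = 1 := by
  have hmem := Nat.sInf_mem (⟨1, h1⟩ : S.Nonempty)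
  have hle := Nat.sInf_le h1
  have e0 : sInf S ≠ 0 := fun h => h0 (h ▸ hmem)
  omega

open CopsRobber in
/-- For `ℓ ≥ 1` and `2 ≤ m ≤ n`, `c_ℓ(K_{m,n}) = 2` and `c'_ℓ(K_{m,n}) = 1`. -/
theorem visCopNumber_completeBipartite (ℓ m n : ℕ) (hℓ : 1 ≤ ℓ) (hm : 2 ≤ m) (hmn : m ≤ n) :
    visCopNumber (completeBipartiteGraph (Fin m) (Fin n)) (ℓ : ℕ∞) = 2 ∧
    visSeeNumber (completeBipartiteGraph (Fin m) (Fin n)) (ℓ : ℕ∞) = 1 := by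
  have hn2 : 2 ≤ n := hm.trans hmn
  have hm1 : 0 < m := by omega
  have hn1 : 0 < n := by omega
  constructor
  · rw [visCopNumber]
    refine sInf_eq_two ⟨σcap hm1 hn1, two_cops_capture hℓ hm1 hn1⟩ ?_ ?_
    · exact one_cop_fails hm hn2 (ℓ : ℕ∞)
    · rintro ⟨σ, hσ⟩
      obtain ⟨t, i, -⟩ := hσ (fun _ => Sum.inl ⟨0, hm1⟩) (fun _ => Or.inl rfl)
      exact i.elim0
  · rw [visSeeNumber]
    refine sInf_eq_one ⟨σsee hm1 hn1, one_cop_sees hℓ hm1 hn1⟩ ?_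
    rintro ⟨σ, hσ⟩
    obtain ⟨t, i, -⟩ := hσ (fun _ => Sum.inl ⟨0, hm1⟩) (fun _ => Or.inl rfl)
    exact i.elim0
end
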